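/- arXiv:2404.15169 — 3 statements merged into one kernel-verified Lean document; each statement's English description precedes it below -/
import Mathlib

section
/- Let Cl(p,q,r) be a Clifford algebra with n = p+q+r odd. The center of Cl(p,q,r) equals the direct sum of the even part of Λ_r (subalgebra generated by the null generators) and the grade-n subspace. -/
open CliffordAlgebra

noncomputable section

/-- Diagonal weights: `p` entries `+1`, `q` entries `-1`, `r` entries `0`. -/
def cliffSig (p q : ℕ) (i : ℕ) : ℝ := if i < p then 1 else if i < p + q then -1 else 0

/-- The quadratic form of signature `(p, q, r)` on `ℝ^(p+q+r)`. -/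
def Qf (p q r : ℕ) : QuadraticForm ℝ (Fin (p + q + r) → ℝ) :=
  QuadraticMap.weightedSumSquares ℝ (fun i : Fin (p + q + r) => cliffSig p q (i : ℕ))

/-- The `i`-th generator `e_i` of `Cl(p,q,r)`. -/
def gen (p q r : ℕ) (i : Fin (p + q + r)) : CliffordAlgebra (Qf p q r) :=
  ι (Qf p q r) (Pi.single i 1)

/-- The grade-`m` subspace `Cl^m(p,q,r)`: span of products of `m` distinct generators
with increasing indices. -/
def gradeSubspace (p q r m : ℕ) : Submodule ℝ (CliffordAlgebra (Qf p q r)) :=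
  Submodule.span ℝ {x | ∃ l : List (Fin (p + q + r)),
    l.Chain' (· < ·) ∧ l.length = m ∧ x = (l.map (gen p q r)).prod}

/-- `Λ_r`: the subalgebra generated by the `r` null generators. -/
def LambdaR (p q r : ℕ) : Subalgebra ℝ (CliffordAlgebra (Qf p q r)) :=
  Algebra.adjoin ℝ {x | ∃ i : Fin (p + q + r), p + q ≤ (i : ℕ) ∧ x = gen p q r i}

/-- `Λ^d_r`: the degree-`d` component of `Λ_r`. -/
def LambdaDeg (p q r d : ℕ) : Submodule ℝ (CliffordAlgebra (Qf p q r)) :=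
  Submodule.span ℝ {x | ∃ l : List (Fin (p + q + r)),
    l.Chain' (· < ·) ∧ l.length = d ∧ (∀ i ∈ l, p + q ≤ (i : ℕ)) ∧
    x = (l.map (gen p q r)).prod}

/-- The pseudoscalar `e_1 ⋯ e_n`. -/
def pseudoscalar (p q r : ℕ) : CliffordAlgebra (Qf p q r) :=
  ((List.finRange (p + q + r)).map (gen p q r)).prod

namespace Stmt14
variable {p q r : ℕ}

lemma Qf_single (i : Fin (p+q+r)) : Qf p q r (Pi.single i 1) = cliffSig p q i := by
  rw [Qf, QuadraticMap.weightedSumSquares_apply]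
  rw [Finset.sum_eq_single i]
  · simp
  · intro k _ hk; simp [Pi.single_apply, hk]
  · simp

lemma gen_sq (i : Fin (p+q+r)) :
    gen p q r i * gen p q r i = algebraMap ℝ _ (cliffSig p q i) := by
  rw [gen, ι_sq_scalar, Qf_single]

lemma polar_single {i j : Fin (p+q+r)} (h : i ≠ j) :
    QuadraticMap.polar (Qf p q r) (Pi.single i 1) (Pi.single j 1) = 0 := by
  rw [QuadraticMap.polar]
  rw [Qf, QuadraticMap.weightedSumSquares_apply, QuadraticMap.weightedSumSquares_apply,
    QuadraticMap.weightedSumSquares_apply]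
  rw [← Finset.sum_sub_distrib, ← Finset.sum_sub_distrib]
  apply Finset.sum_eq_zero
  intro k _
  have : Pi.single (M := fun _ : Fin (p+q+r) => ℝ) i 1 k * Pi.single (M := fun _ : Fin (p+q+r) => ℝ) j 1 k = 0 := by
    rcases eq_or_ne k i with rfl | hki
    · simp [Pi.single_apply, h.symm]
    · simp [Pi.single_apply, hki]
  simp only [Pi.add_apply]
  rw [show ∀ a b : ℝ, (a + b) * (a + b) = a*a + b*b + 2*(a*b) by intros; ring]
  rw [this]
  simp only [smul_eq_mul]
  ring

lemma gen_anticomm {i j : Fin (p+q+r)} (h : i ≠ j) :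
    gen p q r i * gen p q r j = -(gen p q r j * gen p q r i) := by
  have := ι_mul_ι_add_swap (Q := Qf p q r) (Pi.single i 1) (Pi.single j 1)
  rw [polar_single h] at this
  simp only [map_zero] at this
  have h2 : gen p q r i * gen p q r j + gen p q r j * gen p q r i = 0 := this
  rw [eq_neg_iff_add_eq_zero]; exact h2

def prodGen (p q r : ℕ) (l : List (Fin (p+q+r))) : CliffordAlgebra (Qf p q r) :=
  (l.map (gen p q r)).prod

lemma prodGen_nil : prodGen p q r [] = 1 := rfl

lemma prodGen_cons (i : Fin (p+q+r)) (l) :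
    prodGen p q r (i :: l) = gen p q r i * prodGen p q r l := by
  simp [prodGen]

lemma chain'_cons_iff {α : Type*} [Preorder α] {i : α} {t : List α} :
    (i::t).Chain' (· < ·) ↔ (∀ x ∈ t, i < x) ∧ t.Chain' (· < ·) := by
  simp only [List.Chain', List.isChain_iff_pairwise, List.pairwise_cons]

def cnt {m : ℕ} (j : Fin m) (l : List (Fin m)) : ℕ := (l.filter (fun i => i < j)).length
def dnt {m : ℕ} (j : Fin m) (l : List (Fin m)) : ℕ := (l.filter (fun i => j < i)).length

lemma cnt_cons_lt {m : ℕ} {j i : Fin m} (t : List (Fin m)) (h : i < j) :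
    cnt j (i::t) = cnt j t + 1 := by
  simp [cnt, List.filter_cons, h]

lemma cnt_cons_ge {m : ℕ} {j i : Fin m} (t : List (Fin m)) (h : ¬ i < j) :
    cnt j (i::t) = cnt j t := by
  simp [cnt, List.filter_cons, h]

lemma cnt_eq_zero {m : ℕ} {j : Fin m} {l : List (Fin m)} (h : ∀ x ∈ l, ¬ x < j) :
    cnt j l = 0 := by
  simp only [cnt, List.length_eq_zero_iff, List.filter_eq_nil_iff]
  simpa using h

lemma dnt_cons_self {m : ℕ} {j : Fin m} (t : List (Fin m)) (h : ∀ x ∈ t, j < x) :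
    dnt j (j::t) = t.length := by
  have ht : t.filter (fun i => j < i) = t :=
    List.filter_eq_self.mpr (fun a ha => decide_eq_true (h a ha))
  simp [dnt, List.filter_cons, ht]

lemma dnt_cons_of_not_lt {m : ℕ} {j i : Fin m} (t : List (Fin m)) (h : ¬ j < i) :
    dnt j (i::t) = dnt j t := by
  simp [dnt, List.filter_cons, h]

/-- moving a generator past a list not containing it. -/
lemma prod_mul_gen {l : List (Fin (p+q+r))} {j} (hj : j ∉ l) :
    prodGen p q r l * gen p q r j
      = ((-1:ℝ)^l.length) • (gen p q r j * prodGen p q r l) := by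
  induction l with
  | nil => simp [prodGen]
  | cons i t ih =>
    have hij : i ≠ j := by rintro rfl; exact hj (List.mem_cons_self)
    have hjt : j ∉ t := fun h => hj (List.mem_cons_of_mem _ h)
    rw [prodGen_cons, mul_assoc, ih hjt, mul_smul_comm, ← mul_assoc, gen_anticomm hij,
      neg_mul, mul_assoc, ← prodGen_cons, smul_neg, ← neg_smul]
    congr 1
    rw [List.length_cons, pow_succ]
    ring

lemma gen_mul_prod_notMem {l : List (Fin (p+q+r))} {j} (hc : l.Chain' (· < ·)) (hj : j ∉ l) :
    gen p q r j * prodGen p q r l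
      = ((-1:ℝ)^(cnt j l)) • prodGen p q r (l.orderedInsert (· ≤ ·) j) := by
  induction l with
  | nil => simp [cnt, prodGen, List.orderedInsert, gen]
  | cons i t ih =>
    have hji : j ≠ i := by rintro rfl; exact hj (List.mem_cons_self)
    have hjt : j ∉ t := fun h => hj (List.mem_cons_of_mem _ h)
    obtain ⟨hit, hct⟩ := chain'_cons_iff.mp hc
    rcases lt_or_gt_of_ne hji with hlt | hgt
    · have hcnt : cnt j (i::t) = 0 := by
        apply cnt_eq_zero
        intro x hx
        rcases List.mem_cons.mp hx with rfl | hx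
        · exact asymm hlt
        · exact asymm (hlt.trans (hit x hx))
      rw [hcnt, pow_zero, one_smul, List.orderedInsert_cons_of_le (r := (· ≤ ·)) t hlt.le, prodGen_cons,
        prodGen_cons, prodGen_cons]
    · have hins : (i::t).orderedInsert (· ≤ ·) j = i :: t.orderedInsert (· ≤ ·) j := by
        rw [List.orderedInsert, if_neg (by exact not_le.mpr hgt)]
      rw [hins, cnt_cons_lt _ hgt, prodGen_cons, ← mul_assoc, gen_anticomm hji, neg_mul,
        mul_assoc, ih hct hjt, mul_smul_comm, ← prodGen_cons, ← neg_smul]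
      congr 1
      rw [pow_succ]
      ring

lemma gen_mul_prod_mem {l : List (Fin (p+q+r))} {j} (hc : l.Chain' (· < ·)) (hj : j ∈ l) :
    gen p q r j * prodGen p q r l
      = (((-1:ℝ)^(cnt j l)) * cliffSig p q j) • prodGen p q r (l.erase j) := by
  induction l with
  | nil => simp at hj
  | cons i t ih =>
    obtain ⟨hit, hct⟩ := chain'_cons_iff.mp hc
    rcases eq_or_ne j i with rfl | hji
    · have hcnt : cnt j (j::t) = 0 := by
        apply cnt_eq_zero
        intro x hx
        rcases List.mem_cons.mp hx with rfl | hx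
        · exact lt_irrefl _
        · exact asymm (hit x hx)
      rw [hcnt, pow_zero, one_mul, List.erase_cons_head, prodGen_cons, ← mul_assoc, gen_sq,
        ← Algebra.smul_def]
    · have hjt : j ∈ t := (List.mem_cons.mp hj).resolve_left hji
      have hij : i < j := hit j hjt
      rw [List.erase_cons_tail (by simp [Ne.symm hji]), cnt_cons_lt _ hij,
        prodGen_cons, ← mul_assoc, gen_anticomm hji, neg_mul, mul_assoc, ih hct hjt,
        mul_smul_comm, ← prodGen_cons, ← neg_smul]
      congr 1
      rw [pow_succ]
      ring

lemma prod_mul_gen_mem {l : List (Fin (p+q+r))} {j} (hc : l.Chain' (· < ·)) (hj : j ∈ l) :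
    prodGen p q r l * gen p q r j
      = (((-1:ℝ)^(dnt j l)) * cliffSig p q j) • prodGen p q r (l.erase j) := by
  induction l with
  | nil => simp at hj
  | cons i t ih =>
    obtain ⟨hit, hct⟩ := chain'_cons_iff.mp hc
    rcases eq_or_ne j i with rfl | hji
    · have hjt : j ∉ t := fun h => lt_irrefl j (hit j h)
      rw [dnt_cons_self _ hit, List.erase_cons_head, prodGen_cons, mul_assoc,
        prod_mul_gen hjt, mul_smul_comm, ← mul_assoc, gen_sq, ← Algebra.smul_def, smul_smul]
    · have hjt : j ∈ t := (List.mem_cons.mp hj).resolve_left hji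
      have hij : i < j := hit j hjt
      rw [List.erase_cons_tail (by simp [Ne.symm hji]),
        dnt_cons_of_not_lt _ (asymm hij), prodGen_cons, mul_assoc, ih hct hjt,
        mul_smul_comm, ← prodGen_cons]


/-! ### The Fock representation, for linear independence -/

def sgn {m : ℕ} (j : Fin m) (S : Finset (Fin m)) : ℝ := (-1)^((S.filter (· < j)).card)

lemma sgn_sq {m : ℕ} (j : Fin m) (S : Finset (Fin m)) : sgn j S * sgn j S = 1 := by
  rw [sgn, ← pow_add, ← two_mul, pow_mul]
  norm_num

lemma sgn_insert_self {m : ℕ} (j : Fin m) (S : Finset (Fin m)) :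
    sgn j (insert j S) = sgn j S := by
  rw [sgn, sgn, Finset.filter_insert, if_neg (lt_irrefl j)]

lemma sgn_erase_self {m : ℕ} (j : Fin m) (S : Finset (Fin m)) :
    sgn j (S.erase j) = sgn j S := by
  rw [sgn, sgn, Finset.filter_erase, Finset.erase_eq_of_notMem (by simp)]

lemma sgn_insert {m : ℕ} {i j : Fin m} (h : i ≠ j) {S : Finset (Fin m)} (hj : j ∉ S) :
    sgn i (insert j S) = (if j < i then -1 else 1) * sgn i S := by
  rw [sgn, sgn, Finset.filter_insert]
  by_cases hji : j < i
  · rw [if_pos hji, if_pos hji,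
      Finset.card_insert_of_notMem (fun hmem => hj (Finset.mem_filter.mp hmem).1), pow_succ]
    ring
  · rw [if_neg hji, if_neg hji, one_mul]

lemma sgn_erase {m : ℕ} {i j : Fin m} (h : i ≠ j) {S : Finset (Fin m)} (hj : j ∈ S) :
    sgn i (S.erase j) = (if j < i then -1 else 1) * sgn i S := by
  have h2 := sgn_insert h (Finset.notMem_erase j S)
  rw [Finset.insert_erase hj] at h2
  by_cases hji : j < i <;> simp only [hji, if_pos, if_neg, if_true, if_false] at h2 ⊢ <;> linarith

def Lop (p q r : ℕ) (j : Fin (p+q+r)) :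
    (Finset (Fin (p+q+r)) → ℝ) →ₗ[ℝ] (Finset (Fin (p+q+r)) → ℝ) where
  toFun f S := if j ∈ S then sgn j S * f (S.erase j)
    else cliffSig p q j * (sgn j S * f (insert j S))
  map_add' f g := by
    funext S
    simp only [Pi.add_apply]
    by_cases h : j ∈ S <;> simp only [h, if_true, if_false] <;> ring
  map_smul' c f := by
    funext S
    simp only [Pi.smul_apply, smul_eq_mul, RingHom.id_apply]
    by_cases h : j ∈ S <;> simp only [h, if_true, if_false] <;> ring

lemma Lop_apply (j : Fin (p+q+r)) (f : Finset (Fin (p+q+r)) → ℝ) (S) :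
    Lop p q r j f S = if j ∈ S then sgn j S * f (S.erase j)
      else cliffSig p q j * (sgn j S * f (insert j S)) := rfl

lemma Lop_sq (j : Fin (p+q+r)) (f : Finset (Fin (p+q+r)) → ℝ) (S) :
    Lop p q r j (Lop p q r j f) S = cliffSig p q j * f S := by
  by_cases h : j ∈ S
  · rw [Lop_apply, if_pos h, Lop_apply, if_neg (Finset.notMem_erase j S),
      Finset.insert_erase h, sgn_erase_self]
    linear_combination (cliffSig p q (j:ℕ) * f S) * sgn_sq j S
  · rw [Lop_apply, if_neg h, Lop_apply, if_pos (Finset.mem_insert_self j S),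
      Finset.erase_insert h, sgn_insert_self]
    linear_combination (cliffSig p q (j:ℕ) * f S) * sgn_sq j S

lemma Lop_anticomm_aux {i j : Fin (p+q+r)} (hij : i ≠ j) (f : Finset (Fin (p+q+r)) → ℝ) (S)
    (hi : i ∈ S) (hj : j ∉ S) :
    Lop p q r i (Lop p q r j f) S + Lop p q r j (Lop p q r i f) S = 0 := by
  have hji' : j ∉ S.erase i := fun h => hj (Finset.mem_of_mem_erase h)
  have hii' : i ∈ insert j S := Finset.mem_insert_of_mem hi
  rw [Lop_apply, if_pos hi, Lop_apply, if_neg hji',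
    Lop_apply, if_neg hj, Lop_apply, if_pos hii',
    sgn_erase hij.symm hi, sgn_insert hij hj, Finset.erase_insert_of_ne hij.symm]
  rcases lt_or_gt_of_ne hij with h | h
  · rw [if_pos h, if_neg (asymm h)]; ring
  · rw [if_neg (asymm h), if_pos h]; ring

lemma Lop_anticomm {i j : Fin (p+q+r)} (hij : i ≠ j) (f : Finset (Fin (p+q+r)) → ℝ) (S) :
    Lop p q r i (Lop p q r j f) S + Lop p q r j (Lop p q r i f) S = 0 := by
  by_cases hi : i ∈ S <;> by_cases hj : j ∈ S
  · have hji' : j ∈ S.erase i := Finset.mem_erase.mpr ⟨hij.symm, hj⟩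
    have hij' : i ∈ S.erase j := Finset.mem_erase.mpr ⟨hij, hi⟩
    rw [Lop_apply, if_pos hi, Lop_apply, if_pos hji',
      Lop_apply, if_pos hj, Lop_apply, if_pos hij',
      sgn_erase hij.symm hi, sgn_erase hij hj, Finset.erase_right_comm (a := i) (b := j)]
    rcases lt_or_gt_of_ne hij with h | h
    · rw [if_pos h, if_neg (asymm h)]; ring
    · rw [if_neg (asymm h), if_pos h]; ring
  · exact Lop_anticomm_aux hij f S hi hj
  · rw [add_comm]; exact Lop_anticomm_aux hij.symm f S hj hi
  · have hji' : j ∉ insert i S := fun h => hj (Finset.mem_of_mem_insert_of_ne h hij.symm)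
    have hij' : i ∉ insert j S := fun h => hi (Finset.mem_of_mem_insert_of_ne h hij)
    rw [Lop_apply, if_neg hi, Lop_apply, if_neg hji',
      Lop_apply, if_neg hj, Lop_apply, if_neg hij',
      sgn_insert hij.symm hi, sgn_insert hij hj, Finset.insert_comm j i S]
    rcases lt_or_gt_of_ne hij with h | h
    · rw [if_pos h, if_neg (asymm h)]; ring
    · rw [if_neg (asymm h), if_pos h]; ring

lemma sum_cancel {ι : Type*} [Fintype ι] [DecidableEq ι] (a : ι → ι → ℝ)
    (h : ∀ i j, i ≠ j → a i j + a j i = 0) :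
    ∑ i, ∑ j, a i j = ∑ i, a i i := by
  have key : (∑ i, ∑ j, a i j) + (∑ i, ∑ j, a j i) = ∑ i, 2 * a i i := by
    rw [← Finset.sum_add_distrib]
    refine Finset.sum_congr rfl fun i _ => ?_
    rw [← Finset.sum_add_distrib, Finset.sum_eq_single i]
    · ring
    · intro b _ hb; exact h i b (Ne.symm hb)
    · intro hmem; exact absurd (Finset.mem_univ i) hmem
  have e1 : (∑ i : ι, ∑ j : ι, a j i) = ∑ i : ι, ∑ j : ι, a i j := Finset.sum_comm
  rw [e1, ← Finset.mul_sum] at key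
  linarith

def Tmap (p q r : ℕ) :
    (Fin (p+q+r) → ℝ) →ₗ[ℝ] ((Finset (Fin (p+q+r)) → ℝ) →ₗ[ℝ] (Finset (Fin (p+q+r)) → ℝ)) where
  toFun v := ∑ i, v i • Lop p q r i
  map_add' v w := by simp only [Pi.add_apply, add_smul, Finset.sum_add_distrib]
  map_smul' c v := by
    simp only [Pi.smul_apply, smul_eq_mul, RingHom.id_apply, ← Finset.smul_sum, mul_smul]

lemma Tmap_apply (v : Fin (p+q+r) → ℝ) (f : Finset (Fin (p+q+r)) → ℝ) (S) :
    Tmap p q r v f S = ∑ i, v i * Lop p q r i f S := by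
  rw [Tmap]
  simp only [LinearMap.coe_mk, AddHom.coe_mk, LinearMap.coe_sum, LinearMap.smul_apply,
    Finset.sum_apply, Pi.smul_apply, smul_eq_mul]

lemma Tmap_sq (v : Fin (p+q+r) → ℝ) (f : Finset (Fin (p+q+r)) → ℝ) :
    Tmap p q r v (Tmap p q r v f) = Qf p q r v • f := by
  funext S
  rw [Tmap_apply]
  have step : ∀ i, v i * Lop p q r i (Tmap p q r v f) S
      = ∑ j, (v i * v j) * Lop p q r i (Lop p q r j f) S := by
    intro i
    have e0 : Tmap p q r v f = ∑ j, v j • Lop p q r j f := by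
      funext S'
      rw [Tmap_apply]
      simp only [Finset.sum_apply, Pi.smul_apply, smul_eq_mul]
    rw [e0, map_sum]
    have e1 : ∀ j, Lop p q r i (v j • Lop p q r j f) = v j • Lop p q r i (Lop p q r j f) :=
      fun j => map_smul _ _ _
    rw [Finset.sum_congr rfl (fun j _ => e1 j)]
    simp only [Finset.sum_apply, Pi.smul_apply, smul_eq_mul, Finset.mul_sum]
    exact Finset.sum_congr rfl fun j _ => by ring
  rw [Finset.sum_congr rfl (fun i _ => step i)]
  rw [sum_cancel (fun i j => (v i * v j) * Lop p q r i (Lop p q r j f) S)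
    (fun i j hij => by
      have h0 := Lop_anticomm hij f S
      show (v i * v j) * Lop p q r i (Lop p q r j f) S
        + (v j * v i) * Lop p q r j (Lop p q r i f) S = 0
      linear_combination (v i * v j) * h0)]
  have e2 : ∀ i, (v i * v i) * Lop p q r i (Lop p q r i f) S
      = (cliffSig p q i * (v i * v i)) * f S := by
    intro i
    rw [Lop_sq]
    ring
  rw [Finset.sum_congr rfl (fun i _ => e2 i)]
  show _ = Qf p q r v * f S
  rw [Qf, QuadraticMap.weightedSumSquares_apply, Finset.sum_mul]
  exact Finset.sum_congr rfl fun i _ => by simp only [smul_eq_mul]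

/-! ### phi, monomial images, independence, spanning, basis -/

def delta {m : ℕ} (T : Finset (Fin m)) : Finset (Fin m) → ℝ := fun S => if S = T then 1 else 0

def phi (p q r : ℕ) : CliffordAlgebra (Qf p q r) →ₗ[ℝ] (Finset (Fin (p+q+r)) → ℝ) :=
  CliffordAlgebra.foldr (Qf p q r) (Tmap p q r) (fun v f => Tmap_sq v f) (delta ∅)

lemma Tmap_single (j : Fin (p+q+r)) (f : Finset (Fin (p+q+r)) → ℝ) :
    Tmap p q r (Pi.single j 1) f = Lop p q r j f := by
  funext S
  rw [Tmap_apply, Finset.sum_eq_single j]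
  · simp
  · intro b _ hb; simp [Pi.single_apply, hb]
  · simp

lemma phi_gen_mul (j : Fin (p+q+r)) (x : CliffordAlgebra (Qf p q r)) :
    phi p q r (gen p q r j * x) = Lop p q r j (phi p q r x) := by
  rw [phi, gen, CliffordAlgebra.foldr_mul, CliffordAlgebra.foldr_ι, Tmap_single]

lemma Lop_delta {j : Fin (p+q+r)} {T : Finset (Fin (p+q+r))} (hj : j ∉ T) :
    Lop p q r j (delta T) = sgn j T • delta (insert j T) := by
  funext S
  rw [Lop_apply, Pi.smul_apply, smul_eq_mul]
  by_cases h : j ∈ S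
  · rw [if_pos h]
    by_cases h2 : S = insert j T
    · subst h2
      rw [Finset.erase_insert hj, sgn_insert_self]
      simp [delta]
    · have he : S.erase j ≠ T := by
        intro he; exact h2 (by rw [← he, Finset.insert_erase h])
      rw [delta, delta, if_neg he, if_neg h2, mul_zero, mul_zero]
  · rw [if_neg h]
    have he1 : insert j S ≠ T := fun he => hj (he ▸ Finset.mem_insert_self j S)
    have he2 : S ≠ insert j T := fun he => h (he ▸ Finset.mem_insert_self j T)
    rw [delta, delta, if_neg he1, if_neg he2, mul_zero, mul_zero, mul_zero]

lemma phi_one : phi p q r 1 = delta ∅ := by rw [phi, CliffordAlgebra.foldr_one]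

lemma phi_prodGen {l : List (Fin (p+q+r))} (hnd : l.Nodup) :
    ∃ c : ℝ, c ≠ 0 ∧ phi p q r (prodGen p q r l) = c • delta l.toFinset := by
  induction l with
  | nil =>
    exact ⟨1, one_ne_zero, by rw [prodGen_nil, phi_one, one_smul, List.toFinset_nil]⟩
  | cons j t ih =>
    obtain ⟨hjt, hndt⟩ := List.nodup_cons.mp hnd
    obtain ⟨c, hc0, hc⟩ := ih hndt
    have hjT : j ∉ t.toFinset := fun h => hjt (List.mem_toFinset.mp h)
    refine ⟨c * sgn j t.toFinset, mul_ne_zero hc0 (by rw [sgn]; positivity), ?_⟩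
    rw [prodGen_cons, phi_gen_mul, hc, map_smul, Lop_delta hjT, List.toFinset_cons,
      smul_smul, mul_comm c]

def bvec (p q r : ℕ) (S : Finset (Fin (p+q+r))) : CliffordAlgebra (Qf p q r) :=
  prodGen p q r (S.sort (· ≤ ·))

lemma phi_bvec (S : Finset (Fin (p+q+r))) :
    ∃ c : ℝ, c ≠ 0 ∧ phi p q r (bvec p q r S) = c • delta S := by
  obtain ⟨c, hc0, hc⟩ := phi_prodGen (l := S.sort (· ≤ ·)) (Finset.sort_nodup _ _)
  refine ⟨c, hc0, ?_⟩
  rw [bvec, hc]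
  rw [Finset.sort_toFinset]

lemma bvec_linearIndependent : LinearIndependent ℝ (bvec p q r) := by
  choose c hc0 hc using fun S => phi_bvec (p := p) (q := q) (r := r) S
  apply LinearIndependent.of_comp (phi p q r)
  have hdelta : ∀ T : Finset (Fin (p+q+r)), delta T = Pi.single T (1:ℝ) := by
    intro T; funext S; rw [delta, Pi.single_apply]
  have : (phi p q r ∘ bvec p q r)
      = (fun S => Units.mk0 (c S) (hc0 S)) • (Pi.basisFun ℝ (Finset (Fin (p+q+r)))) := by
    funext S
    rw [Function.comp_apply, hc S, hdelta S, Pi.smul_apply']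
    simp [Pi.basisFun_apply]
  rw [this]
  exact (Pi.basisFun ℝ _).linearIndependent.units_smul _

/-! ### Spanning -/

lemma chain'_nodup {α : Type*} [Preorder α] {l : List α} (hc : l.Chain' (· < ·)) : l.Nodup :=
  (List.isChain_iff_pairwise.mp hc).imp ne_of_lt

lemma chain'_erase {α : Type*} [Preorder α] [DecidableEq α] {l : List α}
    (hc : l.Chain' (· < ·)) (j : α) : (l.erase j).Chain' (· < ·) :=
  List.isChain_iff_pairwise.mpr ((List.isChain_iff_pairwise.mp hc).sublist List.erase_sublist)

lemma chain'_orderedInsert {α : Type*} [LinearOrder α] {l : List α} {j : α}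
    (hc : l.Chain' (· < ·)) (hj : j ∉ l) : (l.orderedInsert (· ≤ ·) j).Chain' (· < ·) := by
  have hp := List.isChain_iff_pairwise.mp hc
  have hsorted : (l.orderedInsert (· ≤ ·) j).Pairwise (· ≤ ·) :=
    List.Pairwise.orderedInsert j l (hp.imp le_of_lt)
  have hnd : (l.orderedInsert (· ≤ ·) j).Nodup :=
    (List.perm_orderedInsert (· ≤ ·) j l).nodup_iff.mpr (List.nodup_cons.mpr ⟨hj, chain'_nodup hc⟩)
  refine List.isChain_iff_pairwise.mpr ?_
  exact (hsorted.and hnd).imp (fun h => lt_of_le_of_ne h.1 h.2)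

def Mspan (p q r : ℕ) : Submodule ℝ (CliffordAlgebra (Qf p q r)) :=
  Submodule.span ℝ {x | ∃ l : List (Fin (p+q+r)), l.Chain' (· < ·) ∧ x = prodGen p q r l}

lemma prodGen_mem_Mspan {l : List (Fin (p+q+r))} (hc : l.Chain' (· < ·)) :
    prodGen p q r l ∈ Mspan p q r :=
  Submodule.subset_span ⟨l, hc, rfl⟩

lemma gen_mul_mem_Mspan (j : Fin (p+q+r)) {x} (hx : x ∈ Mspan p q r) :
    gen p q r j * x ∈ Mspan p q r := by
  induction hx using Submodule.span_induction with
  | mem x hmem =>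
    obtain ⟨l, hc, rfl⟩ := hmem
    by_cases hj : j ∈ l
    · rw [gen_mul_prod_mem hc hj]
      exact Submodule.smul_mem _ _ (prodGen_mem_Mspan (chain'_erase hc j))
    · rw [gen_mul_prod_notMem hc hj]
      exact Submodule.smul_mem _ _ (prodGen_mem_Mspan (chain'_orderedInsert hc hj))
  | zero => rw [mul_zero]; exact Submodule.zero_mem _
  | add x y hx hy ihx ihy => rw [mul_add]; exact Submodule.add_mem _ ihx ihy
  | smul a x hx ihx => rw [mul_smul_comm]; exact Submodule.smul_mem _ _ ihx

lemma prodGen_mul_mem_Mspan (l : List (Fin (p+q+r))) {x} (hx : x ∈ Mspan p q r) :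
    prodGen p q r l * x ∈ Mspan p q r := by
  induction l with
  | nil => rw [prodGen_nil, one_mul]; exact hx
  | cons i t ih => rw [prodGen_cons, mul_assoc]; exact gen_mul_mem_Mspan i ih

lemma mul_mem_Mspan {x y} (hx : x ∈ Mspan p q r) (hy : y ∈ Mspan p q r) :
    x * y ∈ Mspan p q r := by
  induction hx using Submodule.span_induction with
  | mem x hmem =>
    obtain ⟨l, hc, rfl⟩ := hmem
    exact prodGen_mul_mem_Mspan l hy
  | zero => rw [zero_mul]; exact Submodule.zero_mem _
  | add a b ha hb iha ihb => rw [add_mul]; exact Submodule.add_mem _ iha ihb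
  | smul a x hx ihx => rw [smul_mul_assoc]; exact Submodule.smul_mem _ _ ihx

lemma gen_mem_Mspan (i : Fin (p+q+r)) : gen p q r i ∈ Mspan p q r := by
  have : gen p q r i = prodGen p q r [i] := by rw [prodGen_cons, prodGen_nil, mul_one]
  rw [this]
  exact prodGen_mem_Mspan (List.isChain_singleton i)

lemma iota_mem_Mspan (v : Fin (p+q+r) → ℝ) : ι (Qf p q r) v ∈ Mspan p q r := by
  have hv : v = ∑ i, v i • (Pi.single (M := fun _ : Fin (p+q+r) => ℝ) i 1) := by
    funext j
    rw [Finset.sum_apply, Finset.sum_eq_single j]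
    · simp
    · intro b _ hb; simp [Pi.single_apply, Ne.symm hb]
    · simp
  rw [hv, map_sum]
  apply Submodule.sum_mem
  intro i _
  rw [map_smul]
  exact Submodule.smul_mem _ _ (gen_mem_Mspan i)

lemma Mspan_eq_top : Mspan p q r = ⊤ := by
  rw [Submodule.eq_top_iff']
  intro x
  induction x using CliffordAlgebra.induction with
  | algebraMap c =>
    rw [Algebra.algebraMap_eq_smul_one]
    exact Submodule.smul_mem _ _ (by
      rw [← prodGen_nil (p := p) (q := q) (r := r)]
      exact prodGen_mem_Mspan List.isChain_nil)
  | ι v => exact iota_mem_Mspan v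
  | mul x y ihx ihy => exact mul_mem_Mspan ihx ihy
  | add x y ihx ihy => exact Submodule.add_mem _ ihx ihy

lemma prodGen_eq_bvec {l : List (Fin (p+q+r))} (hc : l.Chain' (· < ·)) :
    prodGen p q r l = bvec p q r l.toFinset := by
  rw [bvec]
  congr 1
  exact ((List.toFinset_sort (· ≤ ·) (chain'_nodup hc)).mpr
    ((List.isChain_iff_pairwise.mp hc).imp le_of_lt)).symm

lemma bvec_span_top : ⊤ ≤ Submodule.span ℝ (Set.range (bvec p q r)) := by
  rw [← Mspan_eq_top (p := p) (q := q) (r := r)]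
  apply Submodule.span_le.mpr
  rintro x ⟨l, hc, rfl⟩
  exact Submodule.subset_span ⟨l.toFinset, (prodGen_eq_bvec hc).symm⟩

def bb (p q r : ℕ) : Module.Basis (Finset (Fin (p+q+r))) ℝ (CliffordAlgebra (Qf p q r)) :=
  Module.Basis.mk bvec_linearIndependent bvec_span_top

lemma bb_apply (S : Finset (Fin (p+q+r))) : bb p q r S = bvec p q r S := Module.Basis.mk_apply _ _ _

/-! ### Finset-level multiplication rules -/

lemma sort_chain' (S : Finset (Fin (p+q+r))) : (S.sort (· ≤ ·)).Chain' (· < ·) :=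
  List.isChain_iff_pairwise.mpr (List.sortedLT_iff_pairwise.mp (Finset.sortedLT_sort S))

lemma sort_insert {j : Fin (p+q+r)} {S : Finset (Fin (p+q+r))} (hj : j ∉ S) :
    (insert j S).sort (· ≤ ·) = (S.sort (· ≤ ·)).orderedInsert (· ≤ ·) j := by
  have h1 : ((insert j S).sort (· ≤ ·) : Multiset (Fin (p+q+r)))
      = ((j :: S.sort (· ≤ ·) : List (Fin (p+q+r))) : Multiset (Fin (p+q+r))) := by
    rw [Finset.sort_eq, Finset.insert_val_of_notMem hj, ← Multiset.cons_coe, Finset.sort_eq]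
  exact List.Perm.eq_of_pairwise'
    (Finset.pairwise_sort _ _) (List.Pairwise.orderedInsert j _ (Finset.pairwise_sort _ _))
    ((Multiset.coe_eq_coe.mp h1).trans (List.perm_orderedInsert (· ≤ ·) j _).symm)

lemma sort_erase {j : Fin (p+q+r)} {S : Finset (Fin (p+q+r))} :
    (S.erase j).sort (· ≤ ·) = (S.sort (· ≤ ·)).erase j := by
  have h1 : ((S.erase j).sort (· ≤ ·) : Multiset (Fin (p+q+r)))
      = (((S.sort (· ≤ ·)).erase j : List (Fin (p+q+r))) : Multiset (Fin (p+q+r))) := by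
    rw [Finset.sort_eq, Finset.erase_val, ← Multiset.coe_erase, Finset.sort_eq]
  exact List.Perm.eq_of_pairwise'
    (Finset.pairwise_sort _ _) ((Finset.pairwise_sort _ _).sublist List.erase_sublist)
    (Multiset.coe_eq_coe.mp h1)

lemma cnt_sort (j : Fin (p+q+r)) (S : Finset (Fin (p+q+r))) :
    cnt j (S.sort (· ≤ ·)) = (S.filter (· < j)).card := by
  rw [cnt, ← Multiset.coe_card,
    show ((List.filter (fun i => decide (i < j)) (S.sort (· ≤ ·)) : List (Fin (p+q+r)))
        : Multiset (Fin (p+q+r)))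
      = Multiset.filter (fun i => i < j) ((S.sort (· ≤ ·) : List (Fin (p+q+r)))
        : Multiset (Fin (p+q+r))) from rfl, Finset.sort_eq]
  rfl

lemma dnt_sort (j : Fin (p+q+r)) (S : Finset (Fin (p+q+r))) :
    dnt j (S.sort (· ≤ ·)) = (S.filter (fun i => j < i)).card := by
  rw [dnt, ← Multiset.coe_card,
    show ((List.filter (fun i => decide (j < i)) (S.sort (· ≤ ·)) : List (Fin (p+q+r)))
        : Multiset (Fin (p+q+r)))
      = Multiset.filter (fun i => j < i) ((S.sort (· ≤ ·) : List (Fin (p+q+r)))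
        : Multiset (Fin (p+q+r))) from rfl, Finset.sort_eq]
  rfl

lemma gen_mul_bb_notMem {j : Fin (p+q+r)} {S : Finset (Fin (p+q+r))} (hj : j ∉ S) :
    gen p q r j * bb p q r S = ((-1:ℝ)^((S.filter (· < j)).card)) • bb p q r (insert j S) := by
  rw [bb_apply, bb_apply, bvec, bvec,
    gen_mul_prod_notMem (sort_chain' S) (fun h => hj (Finset.mem_sort _ |>.mp h)),
    cnt_sort, sort_insert hj]

lemma gen_mul_bb_mem {j : Fin (p+q+r)} {S : Finset (Fin (p+q+r))} (hj : j ∈ S) :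
    gen p q r j * bb p q r S
      = (((-1:ℝ)^((S.filter (· < j)).card)) * cliffSig p q j) • bb p q r (S.erase j) := by
  rw [bb_apply, bb_apply, bvec, bvec,
    gen_mul_prod_mem (sort_chain' S) (Finset.mem_sort _ |>.mpr hj), cnt_sort, sort_erase]

lemma bb_mul_gen_notMem {j : Fin (p+q+r)} {S : Finset (Fin (p+q+r))} (hj : j ∉ S) :
    bb p q r S * gen p q r j
      = ((-1:ℝ)^(S.card + (S.filter (· < j)).card)) • bb p q r (insert j S) := by
  rw [bb_apply, bvec, prod_mul_gen (fun h => hj (Finset.mem_sort _ |>.mp h)), ← bvec,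
    ← bb_apply, gen_mul_bb_notMem hj, smul_smul, Finset.length_sort (· ≤ ·), ← pow_add]

lemma bb_mul_gen_mem {j : Fin (p+q+r)} {S : Finset (Fin (p+q+r))} (hj : j ∈ S) :
    bb p q r S * gen p q r j
      = (((-1:ℝ)^((S.filter (fun i => j < i)).card)) * cliffSig p q j) • bb p q r (S.erase j) := by
  rw [bb_apply, bb_apply, bvec, bvec,
    prod_mul_gen_mem (sort_chain' S) (Finset.mem_sort _ |>.mpr hj), dnt_sort, sort_erase]

lemma involute_prodGen (l : List (Fin (p+q+r))) :
    involute (prodGen p q r l) = ((-1:ℝ)^l.length) • prodGen p q r l := by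
  induction l with
  | nil => simp [prodGen]
  | cons i t ih =>
    rw [prodGen_cons, map_mul, ih, gen, involute_ι, List.length_cons, pow_succ, neg_mul,
      mul_smul_comm, ← neg_smul]
    congr 1
    ring

lemma involute_bb (S : Finset (Fin (p+q+r))) :
    involute (bb p q r S) = ((-1:ℝ)^S.card) • bb p q r S := by
  rw [bb_apply, bvec, involute_prodGen, Finset.length_sort (· ≤ ·)]

/-! ### commutation facts -/

lemma filter_card_add (j : Fin (p+q+r)) {S : Finset (Fin (p+q+r))} (hj : j ∈ S) :
    (S.filter (· < j)).card + (S.filter (fun i => j < i)).card + 1 = S.card := by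
  have h1 : (S.erase j).filter (· < j) = S.filter (· < j) := by
    rw [Finset.filter_erase, Finset.erase_eq_of_notMem (by simp)]
  have h2 : (S.erase j).filter (fun i => ¬ i < j) = S.filter (fun i => j < i) := by
    ext x
    simp only [Finset.mem_filter, Finset.mem_erase]
    constructor
    · rintro ⟨⟨hxj, hx⟩, hnlt⟩
      exact ⟨hx, lt_of_le_of_ne (not_lt.mp hnlt) (Ne.symm hxj)⟩
    · rintro ⟨hx, hlt⟩
      exact ⟨⟨ne_of_gt hlt, hx⟩, not_lt.mpr hlt.le⟩
  have h3 := Finset.card_filter_add_card_filter_not (s := S.erase j) (p := (· < j))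
  rw [h1, h2] at h3
  rw [h3, Finset.card_erase_of_mem hj]
  have : 1 ≤ S.card := Finset.card_pos.mpr ⟨j, hj⟩
  omega

lemma neg_one_pow_eq_of_even_add {a b : ℕ} (h : Even (a + b)) : ((-1:ℝ))^a = (-1)^b := by
  rcases Nat.even_add.mp h with ⟨he⟩
  by_cases ha : Even a
  · rw [ha.neg_one_pow, (Nat.even_add.mp h |>.mp ha).neg_one_pow]
  · rw [(Nat.not_even_iff_odd.mp ha).neg_one_pow,
      (Nat.not_even_iff_odd.mp fun hb => ha (Nat.even_add.mp h |>.mpr hb)).neg_one_pow]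

lemma cliffSig_eq_zero_iff (j : Fin (p+q+r)) : cliffSig p q (j:ℕ) = 0 ↔ p + q ≤ (j:ℕ) := by
  rw [cliffSig]
  split_ifs with h1 h2
  · constructor
    · intro h; norm_num at h
    · intro h; omega
  · constructor
    · intro h; norm_num at h
    · intro h; omega
  · simp; omega

/-- good sets commute with every generator -/
lemma gen_comm_bb_good (hn : Odd (p+q+r)) {S : Finset (Fin (p+q+r))}
    (hS : ((∀ i ∈ S, p + q ≤ (i:ℕ)) ∧ Even S.card) ∨ S = Finset.univ)
    (j : Fin (p+q+r)) : gen p q r j * bb p q r S = bb p q r S * gen p q r j := by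
  rcases hS with ⟨hnull, heven⟩ | rfl
  · by_cases hj : j ∈ S
    · rw [gen_mul_bb_mem hj, bb_mul_gen_mem hj, (cliffSig_eq_zero_iff j).mpr (hnull j hj),
        mul_zero, mul_zero]
    · rw [gen_mul_bb_notMem hj, bb_mul_gen_notMem hj]
      congr 1
      rw [pow_add, heven.neg_one_pow, one_mul]
  · have hj : j ∈ (Finset.univ : Finset (Fin (p+q+r))) := Finset.mem_univ j
    rw [gen_mul_bb_mem hj, bb_mul_gen_mem hj]
    congr 2
    apply neg_one_pow_eq_of_even_add
    have hcard := filter_card_add j hj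
    rw [Finset.card_univ, Fintype.card_fin] at hcard
    obtain ⟨k, hk⟩ := hn
    exact ⟨k, by omega⟩

lemma comm_all {Z : CliffordAlgebra (Qf p q r)} (h : ∀ j, gen p q r j * Z = Z * gen p q r j) :
    ∀ Y, Z * Y = Y * Z := by
  intro Y
  induction Y using CliffordAlgebra.induction with
  | algebraMap c => rw [Algebra.commutes]
  | ι v =>
    have hv : v = ∑ i, v i • (Pi.single (M := fun _ : Fin (p+q+r) => ℝ) i 1) := by
      funext j
      rw [Finset.sum_apply, Finset.sum_eq_single j]
      · simp
      · intro b _ hb; simp [Pi.single_apply, Ne.symm hb]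
      · simp
    rw [hv, map_sum, Finset.mul_sum, Finset.sum_mul]
    refine Finset.sum_congr rfl fun i _ => ?_
    rw [map_smul, mul_smul_comm, smul_mul_assoc, ← gen, h i]
  | mul x y ihx ihy => rw [← mul_assoc, ihx, mul_assoc, ihy, ← mul_assoc]
  | add x y ihx ihy => rw [mul_add, add_mul, ihx, ihy]

/-! ### unified multiplication rules and coefficient extraction -/

def Fj {m : ℕ} (j : Fin m) (S : Finset (Fin m)) : Finset (Fin m) :=
  if j ∈ S then S.erase j else insert j S

def gL (p q : ℕ) {m : ℕ} (j : Fin m) (S : Finset (Fin m)) : ℝ :=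
  if j ∈ S then (-1)^((S.filter (· < j)).card) * cliffSig p q j
  else (-1)^((S.filter (· < j)).card)

def gR (p q : ℕ) {m : ℕ} (j : Fin m) (S : Finset (Fin m)) : ℝ :=
  if j ∈ S then (-1)^((S.filter (fun i => j < i)).card) * cliffSig p q j
  else (-1)^(S.card + (S.filter (· < j)).card)

lemma Fj_involutive {m : ℕ} (j : Fin m) : Function.Involutive (Fj j) := by
  intro S
  by_cases h : j ∈ S
  · rw [Fj, Fj, if_pos h, if_neg (Finset.notMem_erase j S), Finset.insert_erase h]
  · rw [Fj, Fj, if_neg h, if_pos (Finset.mem_insert_self j S), Finset.erase_insert h]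

lemma Fj_injective {m : ℕ} (j : Fin m) : Function.Injective (Fj j) :=
  (Fj_involutive j).injective

lemma gen_mul_bb (j : Fin (p+q+r)) (S : Finset (Fin (p+q+r))) :
    gen p q r j * bb p q r S = gL p q j S • bb p q r (Fj j S) := by
  by_cases h : j ∈ S
  · rw [gL, Fj, if_pos h, if_pos h, gen_mul_bb_mem h]
  · rw [gL, Fj, if_neg h, if_neg h, gen_mul_bb_notMem h]

lemma bb_mul_gen (j : Fin (p+q+r)) (S : Finset (Fin (p+q+r))) :
    bb p q r S * gen p q r j = gR p q j S • bb p q r (Fj j S) := by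
  by_cases h : j ∈ S
  · rw [gR, Fj, if_pos h, if_pos h, bb_mul_gen_mem h]
  · rw [gR, Fj, if_neg h, if_neg h, bb_mul_gen_notMem h]

lemma repr_sum_apply (d : Finset (Fin (p+q+r)) → ℝ)
    {g : Finset (Fin (p+q+r)) → Finset (Fin (p+q+r))} (hg : Function.Injective g) (T) :
    (bb p q r).repr (∑ S, d S • bb p q r (g S)) (g T) = d T := by
  rw [map_sum, Finsupp.finset_sum_apply, Finset.sum_eq_single T]
  · rw [map_smul, Finsupp.smul_apply, Module.Basis.repr_self, Finsupp.single_eq_same, smul_eq_mul,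
      mul_one]
  · intro b _ hb
    rw [map_smul, Finsupp.smul_apply, Module.Basis.repr_self, Finsupp.single_apply,
      if_neg (fun he => hb (hg he)), smul_zero]
  · intro hmem; exact absurd (Finset.mem_univ T) hmem

lemma repr_sum_apply' (d : Finset (Fin (p+q+r)) → ℝ) (T) :
    (bb p q r).repr (∑ S, d S • bb p q r S) T = d T :=
  repr_sum_apply d Function.injective_id T

lemma central_key {X : CliffordAlgebra (Qf p q r)}
    (hX : ∀ j, gen p q r j * X = X * gen p q r j) (j : Fin (p+q+r)) (S : Finset (Fin (p+q+r))) :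
    (bb p q r).repr X S * (gL p q j S - gR p q j S) = 0 := by
  set c : Finset (Fin (p+q+r)) → ℝ := fun S => (bb p q r).repr X S with hc
  have h0 : (∑ S', (c S' * (gL p q j S' - gR p q j S')) • bb p q r (Fj j S'))
      = (0 : CliffordAlgebra (Qf p q r)) := by
    have e : ∀ S', (c S' * (gL p q j S' - gR p q j S')) • bb p q r (Fj j S')
        = c S' • (gen p q r j * bb p q r S') - c S' • (bb p q r S' * gen p q r j) := by
      intro S'
      rw [gen_mul_bb, bb_mul_gen, smul_smul, smul_smul, ← sub_smul]
      congr 1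
      ring
    rw [Finset.sum_congr rfl (fun S' _ => e S'), Finset.sum_sub_distrib]
    have hx : ∑ S', c S' • (gen p q r j * bb p q r S') = gen p q r j * X := by
      conv_rhs => rw [← Module.Basis.sum_repr (bb p q r) X]
      rw [Finset.mul_sum]
      exact Finset.sum_congr rfl fun S' _ => (mul_smul_comm _ _ _).symm
    have hy : ∑ S', c S' • (bb p q r S' * gen p q r j) = X * gen p q r j := by
      conv_rhs => rw [← Module.Basis.sum_repr (bb p q r) X]
      rw [Finset.sum_mul]
      exact Finset.sum_congr rfl fun S' _ => (smul_mul_assoc _ _ _).symm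
    rw [hx, hy, hX j, sub_self]
  have h1 := congrArg (fun z => (bb p q r).repr z (Fj j S)) h0
  rw [repr_sum_apply _ (Fj_injective j), map_zero, Finsupp.coe_zero, Pi.zero_apply] at h1
  exact h1

lemma central_coeff_zero (hn : Odd (p+q+r)) {X : CliffordAlgebra (Qf p q r)}
    (hX : ∀ j, gen p q r j * X = X * gen p q r j) {S : Finset (Fin (p+q+r))}
    (hbad : ¬((∀ i ∈ S, p + q ≤ (i:ℕ)) ∧ Even S.card)) (hbad2 : S ≠ Finset.univ) :
    (bb p q r).repr X S = 0 := by
  push_neg at hbad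
  by_cases heven : Even S.card
  · -- not all null: pick non-null j ∈ S
    have hex : ∃ j ∈ S, ¬ p + q ≤ (j:ℕ) := by
      by_contra hcon
      push_neg at hcon
      exact (hbad hcon) heven
    obtain ⟨j, hjS, hjnull⟩ := hex
    have hkey := central_key hX j S
    have hdiff : gL p q j S - gR p q j S ≠ 0 := by
      rw [gL, gR, if_pos hjS, if_pos hjS]
      have hodd : Odd ((S.filter (· < j)).card + (S.filter (fun i => j < i)).card) := by
        have := filter_card_add j hjS
        rcases heven with ⟨k, hk⟩
        exact ⟨k - 1, by omega⟩
      set a := (S.filter (· < j)).card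
      set d := (S.filter (fun i => j < i)).card
      have h1 : ((-1:ℝ))^a * (-1)^d = -1 := by
        rw [← pow_add, hodd.neg_one_pow]
      have h2 : ((-1:ℝ))^d * (-1)^d = 1 := by
        rw [← pow_add, Even.neg_one_pow ⟨d, rfl⟩]
      have hw : cliffSig p q (j:ℕ) ≠ 0 := fun h => hjnull ((cliffSig_eq_zero_iff j).mp h)
      intro hzero
      apply hw
      have h3 : ((-1:ℝ))^a = -(-1)^d := by linear_combination ((-1:ℝ))^d * h1 - ((-1:ℝ))^a * h2
      rw [h3] at hzero
      have h4 : (-2 * ((-1:ℝ))^d) * cliffSig p q (j:ℕ) = 0 := by linarith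
      rcases mul_eq_zero.mp h4 with h5 | h5
      · exact absurd h5 (by
          have : ((-1:ℝ))^d ≠ 0 := pow_ne_zero _ (by norm_num)
          intro h6
          apply this
          linarith)
      · exact h5
    exact (mul_eq_zero.mp hkey).resolve_right hdiff
  · -- odd card: pick j ∉ S
    obtain ⟨j, hjS⟩ : ∃ j, j ∉ S := by
      by_contra hcon
      push_neg at hcon
      exact hbad2 (Finset.eq_univ_iff_forall.mpr hcon)
    have hkey := central_key hX j S
    have hdiff : gL p q j S - gR p q j S ≠ 0 := by
      rw [gL, gR, if_neg hjS, if_neg hjS, pow_add]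
      have hco : ((-1:ℝ))^S.card = -1 := (Nat.not_even_iff_odd.mp heven).neg_one_pow
      rw [hco]
      have : ((-1:ℝ))^((S.filter (· < j)).card) ≠ 0 := pow_ne_zero _ (by norm_num)
      intro hzero
      apply this
      linarith
    exact (mul_eq_zero.mp hkey).resolve_right hdiff

/-! ### the null subalgebra -/

lemma bb_empty : bb p q r ∅ = 1 := by
  rw [bb_apply, bvec, Finset.sort_empty, prodGen_nil]

lemma bb_singleton (i : Fin (p+q+r)) : bb p q r {i} = gen p q r i := by
  rw [bb_apply, bvec, Finset.sort_singleton, prodGen_cons, prodGen_nil, mul_one]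

def NS (p q r : ℕ) : Submodule ℝ (CliffordAlgebra (Qf p q r)) :=
  Submodule.span ℝ (bb p q r '' {S : Finset (Fin (p+q+r)) | ∀ i ∈ S, p + q ≤ (i:ℕ)})

lemma bb_mem_NS {S : Finset (Fin (p+q+r))} (hS : ∀ i ∈ S, p + q ≤ (i:ℕ)) : bb p q r S ∈ NS p q r :=
  Submodule.subset_span ⟨S, hS, rfl⟩

lemma gen_mul_mem_NS {j : Fin (p+q+r)} (hj : p + q ≤ (j:ℕ)) {x} (hx : x ∈ NS p q r) :
    gen p q r j * x ∈ NS p q r := by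
  induction hx using Submodule.span_induction with
  | mem x hmem =>
    obtain ⟨S, hS, rfl⟩ := hmem
    by_cases h : j ∈ S
    · rw [gen_mul_bb_mem h]
      exact Submodule.smul_mem _ _ (bb_mem_NS (fun i hi => hS i (Finset.mem_of_mem_erase hi)))
    · rw [gen_mul_bb_notMem h]
      refine Submodule.smul_mem _ _ (bb_mem_NS (fun i hi => ?_))
      rcases Finset.mem_insert.mp hi with rfl | hi
      · exact hj
      · exact hS i hi
  | zero => rw [mul_zero]; exact Submodule.zero_mem _
  | add x y _ _ ihx ihy => rw [mul_add]; exact Submodule.add_mem _ ihx ihy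
  | smul a x _ ihx => rw [mul_smul_comm]; exact Submodule.smul_mem _ _ ihx

lemma prodGen_mul_mem_NS {l : List (Fin (p+q+r))} (hl : ∀ i ∈ l, p + q ≤ (i:ℕ)) {x}
    (hx : x ∈ NS p q r) : prodGen p q r l * x ∈ NS p q r := by
  induction l with
  | nil => rw [prodGen_nil, one_mul]; exact hx
  | cons i t ih =>
    rw [prodGen_cons, mul_assoc]
    exact gen_mul_mem_NS (hl i (List.mem_cons_self))
      (ih (fun k hk => hl k (List.mem_cons_of_mem _ hk)))

lemma one_mem_NS : (1 : CliffordAlgebra (Qf p q r)) ∈ NS p q r := by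
  rw [← bb_empty]
  exact bb_mem_NS (by intro i hi; simp at hi)

lemma mul_mem_NS {x y} (hx : x ∈ NS p q r) (hy : y ∈ NS p q r) : x * y ∈ NS p q r := by
  induction hx using Submodule.span_induction with
  | mem x hmem =>
    obtain ⟨S, hS, rfl⟩ := hmem
    rw [bb_apply, bvec]
    exact prodGen_mul_mem_NS (fun i hi => hS i (Finset.mem_sort _ |>.mp hi)) hy
  | zero => rw [zero_mul]; exact Submodule.zero_mem _
  | add a b _ _ iha ihb => rw [add_mul]; exact Submodule.add_mem _ iha ihb
  | smul a x _ ihx => rw [smul_mul_assoc]; exact Submodule.smul_mem _ _ ihx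

def NSalg (p q r : ℕ) : Subalgebra ℝ (CliffordAlgebra (Qf p q r)) :=
  (NS p q r).toSubalgebra one_mem_NS (fun _ _ hx hy => mul_mem_NS hx hy)

lemma prodGen_mem_LambdaR {l : List (Fin (p+q+r))} (hl : ∀ i ∈ l, p + q ≤ (i:ℕ)) :
    prodGen p q r l ∈ LambdaR p q r := by
  induction l with
  | nil => rw [prodGen_nil]; exact one_mem _
  | cons i t ih =>
    rw [prodGen_cons]
    exact mul_mem (Algebra.subset_adjoin ⟨i, hl i (List.mem_cons_self), rfl⟩)
      (ih fun k hk => hl k (List.mem_cons_of_mem _ hk))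

lemma LambdaR_le_NS {x} (hx : x ∈ LambdaR p q r) : x ∈ NS p q r := by
  have hle : LambdaR p q r ≤ NSalg p q r := by
    rw [LambdaR]
    apply Algebra.adjoin_le
    rintro x ⟨i, hi, rfl⟩
    show gen p q r i ∈ NS p q r
    rw [← bb_singleton]
    exact bb_mem_NS (by intro k hk; rw [Finset.mem_singleton] at hk; subst hk; exact hi)
  exact hle hx

lemma L_comm (hn : Odd (p+q+r)) {L : CliffordAlgebra (Qf p q r)} (hL : L ∈ LambdaR p q r)
    (hinv : involute L = L) (j : Fin (p+q+r)) :
    gen p q r j * L = L * gen p q r j := by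
  have hmem : L ∈ NS p q r := LambdaR_le_NS hL
  have hsupp : ∀ S : Finset (Fin (p+q+r)), ¬(∀ i ∈ S, p + q ≤ (i:ℕ)) →
      (bb p q r).repr L S = 0 := by
    have hsub := (Module.Basis.mem_span_image (b := bb p q r)).mp hmem
    intro S hS
    by_contra hne
    exact hS (hsub (Finsupp.mem_support_iff.mpr hne))
  have heven : ∀ S : Finset (Fin (p+q+r)), Odd S.card → (bb p q r).repr L S = 0 := by
    intro S hodd
    have hinvrepr : involute L
        = ∑ S', ((-1:ℝ)^S'.card * (bb p q r).repr L S') • bb p q r S' := by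
      conv_lhs => rw [← Module.Basis.sum_repr (bb p q r) L]
      rw [map_sum]
      refine Finset.sum_congr rfl fun S' _ => ?_
      rw [map_smul, involute_bb, smul_smul, mul_comm]
    have h1 : (bb p q r).repr (involute L) S = (-1)^S.card * (bb p q r).repr L S := by
      rw [hinvrepr, repr_sum_apply']
    rw [hinv, hodd.neg_one_pow] at h1
    linarith
  conv_lhs => rw [← Module.Basis.sum_repr (bb p q r) L, Finset.mul_sum]
  conv_rhs => rw [← Module.Basis.sum_repr (bb p q r) L, Finset.sum_mul]
  refine Finset.sum_congr rfl fun S _ => ?_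
  by_cases hc : (bb p q r).repr L S = 0
  · rw [hc, zero_smul, mul_zero, zero_mul]
  · have hnull : ∀ i ∈ S, p + q ≤ (i:ℕ) := by
      by_contra hbad
      exact hc (hsupp S hbad)
    have hcard : Even S.card := by
      rcases Nat.even_or_odd S.card with h | h
      · exact h
      · exact absurd (heven S h) hc
    rw [mul_smul_comm, smul_mul_assoc, gen_comm_bb_good hn (Or.inl ⟨hnull, hcard⟩) j]

lemma D_comm (hn : Odd (p+q+r)) {D : CliffordAlgebra (Qf p q r)}
    (hD : D ∈ gradeSubspace p q r (p+q+r)) (j : Fin (p+q+r)) :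
    gen p q r j * D = D * gen p q r j := by
  induction hD using Submodule.span_induction with
  | mem x hmem =>
    obtain ⟨l, hc, hlen, rfl⟩ := hmem
    have hx : (l.map (gen p q r)).prod = bb p q r Finset.univ := by
      have h1 : prodGen p q r l = bvec p q r l.toFinset := prodGen_eq_bvec hc
      have h2 : l.toFinset = Finset.univ := by
        apply Finset.eq_univ_of_card
        rw [List.toFinset_card_of_nodup (chain'_nodup hc), hlen, Fintype.card_fin]
      rw [show (l.map (gen p q r)).prod = prodGen p q r l from rfl, h1, h2, ← bb_apply]
    rw [hx, gen_comm_bb_good hn (Or.inr rfl)]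
  | zero => rw [mul_zero, zero_mul]
  | add x y _ _ ihx ihy => rw [mul_add, add_mul, ihx, ihy]
  | smul a x _ ihx => rw [mul_smul_comm, smul_mul_assoc, ihx]

end Stmt14

open Stmt14

/-- For `n = p + q + r` odd, the center of `Cl(p,q,r)` is the direct sum of the even part
of `Λ_r` and the grade-`n` subspace. -/
theorem stmt14 (p q r : ℕ) (hn : Odd (p + q + r)) (X : CliffordAlgebra (Qf p q r)) :
    (∀ Y : CliffordAlgebra (Qf p q r), X * Y = Y * X) ↔
      ∃ L D : CliffordAlgebra (Qf p q r), L ∈ LambdaR p q r ∧ involute L = L ∧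
        D ∈ gradeSubspace p q r (p + q + r) ∧ X = L + D := by
  constructor
  · intro h
    have hX : ∀ j, gen p q r j * X = X * gen p q r j := fun j => (h (gen p q r j)).symm
    set c : Finset (Fin (p+q+r)) → ℝ := fun S => (bb p q r).repr X S with hcdef
    have hL : X - c Finset.univ • bb p q r Finset.univ
        = ∑ S ∈ Finset.univ.erase Finset.univ, c S • bb p q r S := by
      have h1 := Finset.sum_erase_add Finset.univ (fun S => c S • bb p q r S)
        (Finset.mem_univ (Finset.univ : Finset (Fin (p+q+r))))
      have h2 : ∑ S, c S • bb p q r S = X := Module.Basis.sum_repr (bb p q r) X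
      rw [sub_eq_iff_eq_add]
      exact (h1.trans h2).symm
    refine ⟨X - c Finset.univ • bb p q r Finset.univ,
      c Finset.univ • bb p q r Finset.univ, ?_, ?_, ?_, by abel⟩
    · rw [hL]
      apply Subalgebra.sum_mem
      intro S hS
      have hSne : S ≠ Finset.univ := (Finset.mem_erase.mp hS).1
      by_cases hc0 : c S = 0
      · rw [hc0, zero_smul]; exact zero_mem _
      · have hgood : (∀ i ∈ S, p + q ≤ (i:ℕ)) ∧ Even S.card := by
          by_contra hbad
          exact hc0 (central_coeff_zero hn hX hbad hSne)
        apply Subalgebra.smul_mem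
        rw [bb_apply, bvec]
        exact prodGen_mem_LambdaR (fun i hi => hgood.1 i (Finset.mem_sort _ |>.mp hi))
    · rw [hL, map_sum]
      refine Finset.sum_congr rfl fun S hS => ?_
      have hSne : S ≠ Finset.univ := (Finset.mem_erase.mp hS).1
      by_cases hc0 : c S = 0
      · rw [hc0, zero_smul, map_zero]
      · have hgood : (∀ i ∈ S, p + q ≤ (i:ℕ)) ∧ Even S.card := by
          by_contra hbad
          exact hc0 (central_coeff_zero hn hX hbad hSne)
        rw [map_smul, involute_bb, hgood.2.neg_one_pow, one_smul]
    · apply Submodule.smul_mem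
      apply Submodule.subset_span
      exact ⟨Finset.univ.sort (· ≤ ·), sort_chain' _,
        by rw [Finset.length_sort (· ≤ ·), Finset.card_univ, Fintype.card_fin], bb_apply Finset.univ⟩
  · rintro ⟨L, D, hLmem, hinv, hD, rfl⟩
    intro Y
    exact comm_all (fun j => by
      rw [mul_add, add_mul, L_comm hn hLmem hinv j, D_comm hn hD j]) Y
end
end

section
/- Let Cl(p,q,r) be a Clifford algebra with n = p+q+r even. The center of Cl(p,q,r) equals the even part of Λ_r, the subalgebra generated by the null generators. In particular, for a non-degenerate form of even dimension the center consists only of the scalars. -/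
open CliffordAlgebra

noncomputable section

namespace Stmt15
variable (p q r : ℕ)

lemma Qf_single (i : Fin (p + q + r)) (c : ℝ) :
    Qf p q r (Pi.single i c) = cliffSig p q i * (c * c) := by
  rw [Qf, QuadraticMap.weightedSumSquares_apply]
  rw [Finset.sum_eq_single i]
  · simp
  · intro b _ hb
    simp [Pi.single_apply, hb]
  · simp

lemma gen_sq (i : Fin (p + q + r)) :
    gen p q r i * gen p q r i = algebraMap ℝ _ (cliffSig p q i) := by
  rw [gen, ι_sq_scalar, Qf_single]; ring_nf

lemma gen_anticomm {i j : Fin (p + q + r)} (h : i ≠ j) :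
    gen p q r i * gen p q r j = - (gen p q r j * gen p q r i) := by
  rw [gen, gen]
  apply ι_mul_ι_comm_of_isOrtho
  rw [QuadraticMap.IsOrtho]
  set u : Fin (p+q+r) → ℝ := Pi.single i 1 with hu
  set v : Fin (p+q+r) → ℝ := Pi.single j 1 with hv
  have hsum : ∀ k : Fin (p+q+r), (u + v) k * (u + v) k = u k * u k + v k * v k := by
    intro k
    simp only [hu, hv, Pi.add_apply, Pi.single_apply]
    by_cases hk : k = i <;> by_cases hk2 : k = j <;>
      simp [hk, hk2, h, h.symm, Ne.symm h]
  rw [Qf, QuadraticMap.weightedSumSquares_apply, QuadraticMap.weightedSumSquares_apply,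
    QuadraticMap.weightedSumSquares_apply]
  rw [← Finset.sum_add_distrib]
  apply Finset.sum_congr rfl; intro k _; rw [hsum k, smul_add]

abbrev W := Finset (Fin (p + q + r)) → ℝ

def eps (i : Fin (p + q + r)) (S : Finset (Fin (p + q + r))) : ℝ :=
  (-1) ^ (S.filter (· < i)).card

def eps' (i : Fin (p + q + r)) (S : Finset (Fin (p + q + r))) : ℝ :=
  (-1) ^ (S.filter (i < ·)).card

lemma eps_insert (i x : Fin (p + q + r)) (T : Finset (Fin (p + q + r))) (hx : x ∉ T) :
    eps p q r i (insert x T) = (if x < i then -1 else 1) * eps p q r i T := by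
  unfold eps
  rw [Finset.filter_insert]
  by_cases h : x < i
  · rw [if_pos h, if_pos h, Finset.card_insert_of_notMem (fun hc => hx (Finset.mem_of_mem_filter x hc)), pow_succ]
    ring
  · rw [if_neg h, if_neg h, one_mul]

lemma eps'_insert (i x : Fin (p + q + r)) (T : Finset (Fin (p + q + r))) (hx : x ∉ T) :
    eps' p q r i (insert x T) = (if i < x then -1 else 1) * eps' p q r i T := by
  unfold eps'
  rw [Finset.filter_insert]
  by_cases h : i < x
  · rw [if_pos h, if_pos h, Finset.card_insert_of_notMem (fun hc => hx (Finset.mem_of_mem_filter x hc)), pow_succ]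
    ring
  · rw [if_neg h, if_neg h, one_mul]

lemma eps_erase (i x : Fin (p + q + r)) (S : Finset (Fin (p + q + r))) (hx : x ∈ S) :
    eps p q r i S = (if x < i then -1 else 1) * eps p q r i (S.erase x) := by
  conv_lhs => rw [← Finset.insert_erase hx]
  rw [eps_insert _ _ _ _ _ _ (Finset.notMem_erase x S)]

lemma eps'_erase (i x : Fin (p + q + r)) (S : Finset (Fin (p + q + r))) (hx : x ∈ S) :
    eps' p q r i S = (if i < x then -1 else 1) * eps' p q r i (S.erase x) := by
  conv_lhs => rw [← Finset.insert_erase hx]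
  rw [eps'_insert _ _ _ _ _ _ (Finset.notMem_erase x S)]

lemma eps_sq (i : Fin (p + q + r)) (S : Finset (Fin (p + q + r))) :
    eps p q r i S * eps p q r i S = 1 := by
  unfold eps; rw [← pow_add]; exact Even.neg_one_pow ⟨_, rfl⟩

lemma eps'_sq (i : Fin (p + q + r)) (S : Finset (Fin (p + q + r))) :
    eps' p q r i S * eps' p q r i S = 1 := by
  unfold eps'; rw [← pow_add]; exact Even.neg_one_pow ⟨_, rfl⟩

lemma eps_ne_zero (i : Fin (p + q + r)) (S : Finset (Fin (p + q + r))) :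
    eps p q r i S ≠ 0 := by
  intro h
  have := eps_sq p q r i S
  rw [h, mul_zero] at this
  exact one_ne_zero this.symm

/-- `eps' = (-1)^|S| * eps` when `i ∉ S`. -/
lemma eps'_eq (i : Fin (p + q + r)) (S : Finset (Fin (p + q + r))) (hi : i ∉ S) :
    eps' p q r i S = (-1) ^ S.card * eps p q r i S := by
  have hfilter : S.filter (i < ·) = S.filter (fun j => ¬ j < i) := by
    apply Finset.filter_congr
    intro j hj
    have hji : j ≠ i := fun h => hi (h ▸ hj)
    constructor
    · intro h; exact not_lt_of_gt h
    · intro h; exact lt_of_le_of_ne (not_lt.mp h) (Ne.symm hji)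
  have hcard : (S.filter (· < i)).card + (S.filter (i < ·)).card = S.card := by
    rw [hfilter]
    exact Finset.card_filter_add_card_filter_not _
  unfold eps eps'
  have : ((-1 : ℝ)) ^ S.card = (-1) ^ ((S.filter (· < i)).card + (S.filter (i < ·)).card) := by rw [hcard]
  rw [this, pow_add]
  have h2 : ((-1:ℝ)) ^ (S.filter (· < i)).card * (-1) ^ (S.filter (· < i)).card = 1 := by
    rw [← pow_add]; exact Even.neg_one_pow ⟨_, rfl⟩
  rw [mul_right_comm, h2, one_mul]

def op (i : Fin (p + q + r)) : W p q r →ₗ[ℝ] W p q r where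
  toFun f S := if i ∈ S then eps p q r i S * f (S.erase i)
    else cliffSig p q i * (eps p q r i S * f (insert i S))
  map_add' f g := by
    funext S
    by_cases h : i ∈ S <;> simp [h] <;> ring
  map_smul' c f := by
    funext S
    simp only [Pi.smul_apply, smul_eq_mul, RingHom.id_apply]
    by_cases h : i ∈ S <;> simp only [h, if_true, if_false, Pi.smul_apply, smul_eq_mul] <;> ring

def rop (i : Fin (p + q + r)) : W p q r →ₗ[ℝ] W p q r where
  toFun f S := if i ∈ S then eps' p q r i S * f (S.erase i)
    else cliffSig p q i * (eps' p q r i S * f (insert i S))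
  map_add' f g := by
    funext S
    by_cases h : i ∈ S <;> simp [h] <;> ring
  map_smul' c f := by
    funext S
    simp only [Pi.smul_apply, smul_eq_mul, RingHom.id_apply]
    by_cases h : i ∈ S <;> simp only [h, if_true, if_false, Pi.smul_apply, smul_eq_mul] <;> ring

lemma op_apply (i : Fin (p + q + r)) (f : W p q r) (S : Finset (Fin (p + q + r))) :
    op p q r i f S = if i ∈ S then eps p q r i S * f (S.erase i)
      else cliffSig p q i * (eps p q r i S * f (insert i S)) := rfl

lemma rop_apply (i : Fin (p + q + r)) (f : W p q r) (S : Finset (Fin (p + q + r))) :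
    rop p q r i f S = if i ∈ S then eps' p q r i S * f (S.erase i)
      else cliffSig p q i * (eps' p q r i S * f (insert i S)) := rfl

lemma sign_sq (P : Prop) [Decidable P] : (if P then (-1:ℝ) else 1) * (if P then -1 else 1) = 1 := by
  split <;> ring

lemma sign_add (i j : Fin (p + q + r)) (h : i ≠ j) :
    (if j < i then (-1:ℝ) else 1) + (if i < j then -1 else 1) = 0 := by
  rcases lt_trichotomy i j with hlt | heq | hlt
  · rw [if_neg (asymm hlt), if_pos hlt]; ring
  · exact absurd heq h
  · rw [if_pos hlt, if_neg (asymm hlt)]; ring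

lemma op_sq_apply (i : Fin (p + q + r)) (f : W p q r) (S : Finset (Fin (p + q + r))) :
    op p q r i (op p q r i f) S = cliffSig p q i * f S := by
  by_cases hi : i ∈ S
  · rw [op_apply, if_pos hi, op_apply, if_neg (Finset.notMem_erase i S),
      Finset.insert_erase hi, eps_erase p q r i i S hi, if_neg (lt_irrefl i), one_mul]
    have h2 := eps_sq p q r i (S.erase i)
    linear_combination (cliffSig p q ↑i * f S) * h2
  · rw [op_apply, if_neg hi, op_apply, if_pos (Finset.mem_insert_self i S),
      Finset.erase_insert hi, eps_insert p q r i i S hi, if_neg (lt_irrefl i), one_mul]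
    have h2 := eps_sq p q r i S
    linear_combination (cliffSig p q ↑i * f S) * h2

lemma op_anticomm (i j : Fin (p + q + r)) (h : i ≠ j) (f : W p q r) (S : Finset (Fin (p + q + r))) :
    op p q r i (op p q r j f) S + op p q r j (op p q r i f) S = 0 := by
  by_cases hi : i ∈ S <;> by_cases hj : j ∈ S
  · -- both in S
    have hij : i ∈ S.erase j := Finset.mem_erase.mpr ⟨h, hi⟩
    have hji : j ∈ S.erase i := Finset.mem_erase.mpr ⟨h.symm, hj⟩
    rw [op_apply, if_pos hi, op_apply, if_pos hji, op_apply, if_pos hj, op_apply, if_pos hij]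
    rw [Finset.erase_right_comm (a := i) (b := j)]
    rw [eps_erase p q r i j S hj, eps_erase p q r j i S hi]
    rcases h.lt_or_gt with h1 | h1 <;>
      simp only [h1, asymm h1, if_true, if_false] <;> ring
  · -- i ∈ S, j ∉ S
    have hji : j ∉ S.erase i := fun hc => hj (Finset.mem_of_mem_erase hc)
    have hij : i ∈ insert j S := Finset.mem_insert_of_mem hi
    rw [op_apply, if_pos hi, op_apply, if_neg hji, op_apply, if_neg hj, op_apply, if_pos hij]
    rw [Finset.erase_insert_of_ne h.symm, eps_erase p q r j i S hi, eps_insert p q r i j S hj]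
    rcases h.lt_or_gt with h1 | h1 <;>
      simp only [h1, asymm h1, if_true, if_false] <;> ring
  · -- i ∉ S, j ∈ S
    have hij : i ∉ S.erase j := fun hc => hi (Finset.mem_of_mem_erase hc)
    have hji : j ∈ insert i S := Finset.mem_insert_of_mem hj
    rw [op_apply, if_neg hi, op_apply, if_pos hji, op_apply, if_pos hj, op_apply, if_neg hij]
    rw [Finset.erase_insert_of_ne h, eps_erase p q r i j S hj, eps_insert p q r j i S hi]
    rcases h.lt_or_gt with h1 | h1 <;>
      simp only [h1, asymm h1, if_true, if_false] <;> ring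
  · -- neither
    have hji : j ∉ insert i S := by
      simp only [Finset.mem_insert]
      rintro (hc | hc); exact h (hc.symm) ; exact hj hc
    have hij : i ∉ insert j S := by
      simp only [Finset.mem_insert]
      rintro (hc | hc); exact h hc; exact hi hc
    rw [op_apply, if_neg hi, op_apply, if_neg hji, op_apply, if_neg hj, op_apply, if_neg hij]
    rw [Finset.insert_comm j i S, eps_insert p q r j i S hi, eps_insert p q r i j S hj]
    rcases h.lt_or_gt with h1 | h1 <;>
      simp only [h1, asymm h1, if_true, if_false] <;> ring

lemma op_rop_comm (i j : Fin (p + q + r)) (f : W p q r) (S : Finset (Fin (p + q + r))) :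
    op p q r i (rop p q r j f) S = rop p q r j (op p q r i f) S := by
  rcases eq_or_ne i j with rfl | h
  · by_cases hi : i ∈ S
    · rw [op_apply, if_pos hi, rop_apply, if_neg (Finset.notMem_erase i S),
        rop_apply, if_pos hi, op_apply, if_neg (Finset.notMem_erase i S),
        Finset.insert_erase hi,
        eps_erase p q r i i S hi, eps'_erase p q r i i S hi,
        if_neg (lt_irrefl i), one_mul, one_mul]
      ring
    · rw [op_apply, if_neg hi, rop_apply, if_pos (Finset.mem_insert_self i S),
        rop_apply, if_neg hi, op_apply, if_pos (Finset.mem_insert_self i S),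
        Finset.erase_insert hi,
        eps_insert p q r i i S hi, eps'_insert p q r i i S hi,
        if_neg (lt_irrefl i), one_mul, one_mul]
      ring
  · by_cases hi : i ∈ S <;> by_cases hj : j ∈ S
    · have hij : i ∈ S.erase j := Finset.mem_erase.mpr ⟨h, hi⟩
      have hji : j ∈ S.erase i := Finset.mem_erase.mpr ⟨h.symm, hj⟩
      rw [op_apply, if_pos hi, rop_apply, if_pos hji, rop_apply, if_pos hj, op_apply, if_pos hij]
      rw [Finset.erase_right_comm (a := i) (b := j)]
      rw [eps_erase p q r i j S hj, eps'_erase p q r j i S hi]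
      by_cases h1 : j < i <;> simp only [h1, if_true, if_false] <;> ring
    · have hji : j ∉ S.erase i := fun hc => hj (Finset.mem_of_mem_erase hc)
      have hij : i ∈ insert j S := Finset.mem_insert_of_mem hi
      rw [op_apply, if_pos hi, rop_apply, if_neg hji, rop_apply, if_neg hj, op_apply, if_pos hij]
      rw [Finset.erase_insert_of_ne h.symm, eps'_erase p q r j i S hi, eps_insert p q r i j S hj]
      by_cases h1 : j < i <;> simp only [h1, if_true, if_false] <;> ring
    · have hij : i ∉ S.erase j := fun hc => hi (Finset.mem_of_mem_erase hc)
      have hji : j ∈ insert i S := Finset.mem_insert_of_mem hj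
      rw [op_apply, if_neg hi, rop_apply, if_pos hji, rop_apply, if_pos hj, op_apply, if_neg hij]
      rw [Finset.erase_insert_of_ne h, eps_erase p q r i j S hj, eps'_insert p q r j i S hi]
      by_cases h1 : j < i <;> simp only [h1, if_true, if_false] <;> ring
    · have hji : j ∉ insert i S := by
        simp only [Finset.mem_insert]
        rintro (hc | hc); exact h (hc.symm) ; exact hj hc
      have hij : i ∉ insert j S := by
        simp only [Finset.mem_insert]
        rintro (hc | hc); exact h hc; exact hi hc
      rw [op_apply, if_neg hi, rop_apply, if_neg hji, rop_apply, if_neg hj, op_apply, if_neg hij]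
      rw [Finset.insert_comm j i S, eps_insert p q r i j S hj, eps'_insert p q r j i S hi]
      by_cases h1 : j < i <;> simp only [h1, if_true, if_false] <;> ring

def fmap : (Fin (p + q + r) → ℝ) →ₗ[ℝ] Module.End ℝ (W p q r) where
  toFun v := ∑ i, v i • op p q r i
  map_add' v w := by
    simp only [Pi.add_apply, add_smul]
    rw [Finset.sum_add_distrib]
  map_smul' c v := by
    simp only [Pi.smul_apply, smul_eq_mul, RingHom.id_apply, mul_smul]
    rw [Finset.smul_sum]

lemma fmap_apply (v : Fin (p + q + r) → ℝ) (f : W p q r) (S : Finset (Fin (p + q + r))) :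
    fmap p q r v f S = ∑ i, v i * op p q r i f S := by
  show (∑ i, v i • op p q r i) f S = _
  rw [LinearMap.sum_apply]
  show (∑ i, (v i • op p q r i) f) S = _
  rw [Finset.sum_apply]
  apply Finset.sum_congr rfl
  intro i _
  simp

lemma fmap_sq (v : Fin (p + q + r) → ℝ) :
    fmap p q r v * fmap p q r v = algebraMap ℝ (Module.End ℝ (W p q r)) (Qf p q r v) := by
  apply LinearMap.ext
  intro f
  funext S
  rw [Module.algebraMap_end_apply]
  show fmap p q r v (fmap p q r v f) S = _
  have expand : fmap p q r v (fmap p q r v f) S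
      = ∑ i, ∑ j, v i * v j * op p q r i (op p q r j f) S := by
    rw [fmap_apply]
    apply Finset.sum_congr rfl
    intro i _
    have : fmap p q r v f = fun T => ∑ j, v j * op p q r j f T := by
      funext T; rw [fmap_apply]
    rw [this]
    have hop : op p q r i (fun T => ∑ j, v j * op p q r j f T) S
        = ∑ j, v j * op p q r i (op p q r j f) S := by
      have : (fun T => ∑ j, v j * op p q r j f T) = ∑ j, v j • op p q r j f := by
        funext T
        rw [Finset.sum_apply]
        apply Finset.sum_congr rfl
        intro j _
        simp
      rw [this, map_sum]
      rw [Finset.sum_apply]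
      apply Finset.sum_congr rfl
      intro j _
      rw [map_smul]
      simp
    rw [hop, Finset.mul_sum]
    apply Finset.sum_congr rfl
    intro j _
    ring
  rw [expand]
  have key : (∑ i, ∑ j, v i * v j * op p q r i (op p q r j f) S) * 2
      = ∑ i : Fin (p + q + r), (cliffSig p q (i : ℕ) * (v i * v i) * f S) * 2 := by
    have swap : ∑ i, ∑ j, v i * v j * op p q r i (op p q r j f) S
        = ∑ i, ∑ j, v j * v i * op p q r j (op p q r i f) S := Finset.sum_comm
    calc (∑ i, ∑ j, v i * v j * op p q r i (op p q r j f) S) * 2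
        = (∑ i, ∑ j, v i * v j * op p q r i (op p q r j f) S)
          + (∑ i, ∑ j, v j * v i * op p q r j (op p q r i f) S) := by rw [← swap]; ring
      _ = ∑ i, ∑ j, (v i * v j * op p q r i (op p q r j f) S
            + v j * v i * op p q r j (op p q r i f) S) := by
          rw [← Finset.sum_add_distrib]
          apply Finset.sum_congr rfl
          intro i _
          rw [← Finset.sum_add_distrib]
      _ = ∑ i : Fin (p + q + r), ∑ j, (if j = i then (cliffSig p q (i : ℕ) * (v i * v i) * f S) * 2 else 0) := by
          apply Finset.sum_congr rfl
          intro i _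
          apply Finset.sum_congr rfl
          intro j _
          rcases eq_or_ne j i with rfl | hne
          · rw [if_pos rfl, op_sq_apply]; ring
          · rw [if_neg hne]
            have h := op_anticomm p q r i j (Ne.symm hne) f S
            linear_combination (v i * v j) * h
      _ = ∑ i : Fin (p + q + r), (cliffSig p q (i : ℕ) * (v i * v i) * f S) * 2 := by
          apply Finset.sum_congr rfl
          intro i _
          rw [Finset.sum_ite_eq' Finset.univ i]
          rw [if_pos (Finset.mem_univ i)]
  have hQ : Qf p q r v = ∑ i : Fin (p + q + r), cliffSig p q (i : ℕ) * (v i * v i) := by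
    rw [Qf, QuadraticMap.weightedSumSquares_apply]
    apply Finset.sum_congr rfl
    intro i _
    rw [smul_eq_mul]
  have hgoal : (∑ i, ∑ j, v i * v j * op p q r i (op p q r j f) S)
      = ∑ i : Fin (p + q + r), cliffSig p q (i : ℕ) * (v i * v i) * f S := by
    apply mul_right_cancel₀ (b := (2:ℝ)) two_ne_zero
    rw [key, Finset.sum_mul]
  rw [hgoal, hQ]
  rw [Pi.smul_apply, smul_eq_mul, Finset.sum_mul]

def Phi : CliffordAlgebra (Qf p q r) →ₐ[ℝ] Module.End ℝ (W p q r) :=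
  CliffordAlgebra.lift (Qf p q r) ⟨fmap p q r, fmap_sq p q r⟩

lemma Phi_ι (v : Fin (p + q + r) → ℝ) : Phi p q r (ι (Qf p q r) v) = fmap p q r v := by
  rw [Phi, CliffordAlgebra.lift_ι_apply]

lemma Phi_gen (i : Fin (p + q + r)) : Phi p q r (gen p q r i) = op p q r i := by
  rw [gen, Phi_ι]
  apply LinearMap.ext
  intro f
  funext S
  rw [fmap_apply]
  rw [Finset.sum_eq_single i]
  · simp
  · intro b _ hb
    simp [Pi.single_apply, hb]
  · simp

def x0 : W p q r := fun S => if S = ∅ then 1 else 0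

def lam (X : CliffordAlgebra (Qf p q r)) : W p q r := Phi p q r X (x0 p q r)

lemma lam_add (X Y : CliffordAlgebra (Qf p q r)) : lam p q r (X + Y) = lam p q r X + lam p q r Y := by
  unfold lam; rw [map_add]; rfl

lemma lam_smul (c : ℝ) (X : CliffordAlgebra (Qf p q r)) : lam p q r (c • X) = c • lam p q r X := by
  unfold lam; rw [map_smul]; rfl

lemma lam_zero : lam p q r 0 = 0 := by
  unfold lam; rw [map_zero]; rfl

lemma lam_one : lam p q r 1 = x0 p q r := by
  unfold lam; rw [map_one]; rfl

lemma lam_gen_mul (i : Fin (p + q + r)) (X : CliffordAlgebra (Qf p q r)) :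
    lam p q r (gen p q r i * X) = op p q r i (lam p q r X) := by
  unfold lam
  rw [map_mul, Phi_gen]
  rfl

lemma Phi_rop_comm (j : Fin (p + q + r)) (X : CliffordAlgebra (Qf p q r)) (f : W p q r) :
    Phi p q r X (rop p q r j f) = rop p q r j (Phi p q r X f) := by
  induction X using CliffordAlgebra.induction generalizing f with
  | algebraMap c =>
    rw [AlgHom.commutes]
    rw [Module.algebraMap_end_apply, Module.algebraMap_end_apply, map_smul]
  | ι v =>
    rw [Phi_ι]
    have h1 : fmap p q r v (rop p q r j f) = ∑ i, v i • op p q r i (rop p q r j f) := by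
      show (∑ i, v i • op p q r i) (rop p q r j f) = _
      rw [LinearMap.sum_apply]
      apply Finset.sum_congr rfl
      intro i _
      simp
    have h2 : fmap p q r v f = ∑ i, v i • op p q r i f := by
      show (∑ i, v i • op p q r i) f = _
      rw [LinearMap.sum_apply]
      apply Finset.sum_congr rfl
      intro i _
      simp
    rw [h1, h2, map_sum]
    apply Finset.sum_congr rfl
    intro i _
    rw [map_smul]
    congr 1
    funext S
    exact op_rop_comm p q r i j f S
  | mul a b ha hb =>
    rw [map_mul]
    show Phi p q r a (Phi p q r b (rop p q r j f)) = _
    rw [hb, ha]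
    rfl
  | add a b ha hb =>
    rw [map_add]
    show Phi p q r a (rop p q r j f) + Phi p q r b (rop p q r j f) = _
    rw [ha, hb]
    show _ = rop p q r j (Phi p q r a f + Phi p q r b f)
    rw [map_add]

lemma op_x0 (i : Fin (p + q + r)) : op p q r i (x0 p q r) = rop p q r i (x0 p q r) := by
  funext S
  rw [op_apply, rop_apply]
  by_cases hi : i ∈ S
  · have h1 : x0 p q r (S.erase i) = if S = {i} then 1 else 0 := by
      unfold x0
      congr 1
      simp only [eq_iff_iff]
      constructor
      · intro h
        have := Finset.insert_erase hi
        rw [← this, h]; rfl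
      · intro h; rw [h]; simp
    rw [if_pos hi, if_pos hi, h1]
    by_cases hS : S = {i}
    · subst hS
      rw [if_pos rfl]
      have : eps p q r i {i} = 1 := by
        unfold eps
        have : ({i} : Finset (Fin (p+q+r))).filter (· < i) = ∅ := by
          apply Finset.filter_false_of_mem
          intro x hx
          rw [Finset.mem_singleton] at hx
          subst hx
          exact lt_irrefl x
        rw [this]; simp
      have h' : eps' p q r i {i} = 1 := by
        unfold eps'
        have : ({i} : Finset (Fin (p+q+r))).filter (i < ·) = ∅ := by
          apply Finset.filter_false_of_mem
          intro x hx
          rw [Finset.mem_singleton] at hx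
          subst hx
          exact lt_irrefl x
        rw [this]; simp
      rw [this, h']
    · rw [if_neg hS]; ring
  · rw [if_neg hi, if_neg hi]
    have : x0 p q r (insert i S) = 0 := by
      unfold x0
      rw [if_neg (Finset.insert_ne_empty i S)]
    rw [this]
    ring

lemma lam_mul_gen (i : Fin (p + q + r)) (X : CliffordAlgebra (Qf p q r)) :
    lam p q r (X * gen p q r i) = rop p q r i (lam p q r X) := by
  unfold lam
  rw [map_mul]
  show Phi p q r X (Phi p q r (gen p q r i) (x0 p q r)) = _
  rw [Phi_gen]
  show Phi p q r X (op p q r i (x0 p q r)) = _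
  rw [op_x0, Phi_rop_comm]

def prodl (l : List (Fin (p + q + r))) : CliffordAlgebra (Qf p q r) := (l.map (gen p q r)).prod

def TsetB (L : ℕ) : Set (CliffordAlgebra (Qf p q r)) :=
  {x | ∃ l : List (Fin (p + q + r)), l.Chain' (· < ·) ∧ l.length ≤ L ∧ x = prodl p q r l}

def Tset : Set (CliffordAlgebra (Qf p q r)) :=
  {x | ∃ l : List (Fin (p + q + r)), l.Chain' (· < ·) ∧ x = prodl p q r l}

lemma TsetB_mono {L L' : ℕ} (h : L ≤ L') : TsetB p q r L ⊆ TsetB p q r L' := by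
  rintro x ⟨l, hc, hl, rfl⟩
  exact ⟨l, hc, hl.trans h, rfl⟩

lemma TsetB_subset_Tset (L : ℕ) : TsetB p q r L ⊆ Tset p q r := by
  rintro x ⟨l, hc, _, rfl⟩
  exact ⟨l, hc, rfl⟩

lemma prodl_cons (a : Fin (p + q + r)) (t : List (Fin (p + q + r))) :
    prodl p q r (a :: t) = gen p q r a * prodl p q r t := by
  unfold prodl
  rw [List.map_cons, List.prod_cons]

lemma gen_mul_prodl_mem (N : ℕ) :
    ∀ (i : Fin (p + q + r)) (l : List (Fin (p + q + r))), l.Chain' (· < ·) →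
      l.length * (p + q + r + 1) + (i : ℕ) ≤ N →
      gen p q r i * prodl p q r l ∈ Submodule.span ℝ (TsetB p q r (l.length + 1)) := by
  induction N using Nat.strong_induction_on with
  | _ N IH =>
    intro i l hc hm
    match l with
    | [] =>
      apply Submodule.subset_span
      refine ⟨[i], List.isChain_singleton i, by simp, ?_⟩
      unfold prodl
      simp
    | a :: t =>
      have hct : t.Chain' (· < ·) := hc.tail
      rcases lt_trichotomy i a with hlt | rfl | hlt
      · apply Submodule.subset_span
        refine ⟨i :: a :: t, ?_, by simp, ?_⟩
        · exact List.isChain_cons_cons.mpr ⟨hlt, hc⟩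
        · simp only [prodl_cons]
      · rw [prodl_cons, ← mul_assoc, gen_sq, ← Algebra.smul_def]
        apply Submodule.smul_mem
        apply Submodule.subset_span
        exact ⟨t, hct, by simp [Nat.le_succ_of_le (Nat.le_succ _)], rfl⟩
      · -- a < i
        have hN : 0 < N := by
          have : 0 < l.length * (p + q + r + 1) + (i : ℕ) + 1 := Nat.succ_pos _
          omega
        rw [prodl_cons, ← mul_assoc, gen_anticomm p q r (ne_of_gt hlt), neg_mul, mul_assoc]
        apply Submodule.neg_mem
        have ht : gen p q r i * prodl p q r t ∈ Submodule.span ℝ (TsetB p q r (t.length + 1)) := by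
          apply IH (N - 1) (by omega) i t hct
          have h1 : (a :: t).length = t.length + 1 := rfl
          rw [h1] at hm
          have h2 : (t.length + 1) * (p + q + r + 1)
              = t.length * (p + q + r + 1) + (p + q + r + 1) := by ring
          have h3 : i.val < p + q + r := i.isLt
          omega
        have hmul : ∀ x ∈ Submodule.span ℝ (TsetB p q r (t.length + 1)),
            gen p q r a * x ∈ Submodule.span ℝ (TsetB p q r ((a :: t).length + 1)) := by
          intro x hx
          induction hx using Submodule.span_induction with
          | mem y hy =>
            obtain ⟨m, hcm, hlm, rfl⟩ := hy
            have hstep : gen p q r a * prodl p q r m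
                ∈ Submodule.span ℝ (TsetB p q r (m.length + 1)) := by
              apply IH (N - 1) (by omega) a m hcm
              have h1 : (a :: t).length = t.length + 1 := rfl
              rw [h1] at hm
              have h2 : (a : ℕ) < (i : ℕ) := hlt
              have h3 := Nat.mul_le_mul_right (p + q + r + 1) hlm
              have h4 : (t.length + 1) * (p + q + r + 1)
                  = t.length * (p + q + r + 1) + (p + q + r + 1) := by ring
              have h5 : (a : ℕ) < p + q + r := a.isLt
              omega
            refine Submodule.span_mono (TsetB_mono p q r ?_) hstep
            show m.length + 1 ≤ (a :: t).length + 1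
            have : (a :: t).length = t.length + 1 := rfl
            omega
          | zero => rw [mul_zero]; exact Submodule.zero_mem _
          | add y z _ _ hy hz =>
            rw [mul_add]; exact Submodule.add_mem _ hy hz
          | smul c y _ hy =>
            rw [mul_smul_comm]; exact Submodule.smul_mem _ _ hy
        exact hmul _ ht

lemma gen_mul_mem_span (i : Fin (p + q + r)) (X : CliffordAlgebra (Qf p q r))
    (hX : X ∈ Submodule.span ℝ (Tset p q r)) :
    gen p q r i * X ∈ Submodule.span ℝ (Tset p q r) := by
  induction hX using Submodule.span_induction with
  | mem y hy =>
    obtain ⟨l, hcl, rfl⟩ := hy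
    have := gen_mul_prodl_mem p q r (l.length * (p + q + r + 1) + (i : ℕ)) i l hcl le_rfl
    exact Submodule.span_mono (TsetB_subset_Tset p q r _) this
  | zero => rw [mul_zero]; exact Submodule.zero_mem _
  | add y z _ _ hy hz => rw [mul_add]; exact Submodule.add_mem _ hy hz
  | smul c y _ hy => rw [mul_smul_comm]; exact Submodule.smul_mem _ _ hy

lemma iota_eq_sum (v : Fin (p + q + r) → ℝ) :
    ι (Qf p q r) v = ∑ i, v i • gen p q r i := by
  have hv : v = ∑ i, Pi.single i (v i) := (Finset.univ_sum_single v).symm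
  conv_lhs => rw [hv]
  rw [map_sum]
  apply Finset.sum_congr rfl
  intro i _
  have : Pi.single i (v i) = v i • (Pi.single i 1 : Fin (p + q + r) → ℝ) := by
    funext k
    by_cases hk : k = i
    · subst hk; simp
    · simp [Pi.single_apply, hk]
  rw [this, map_smul, gen]

lemma mem_span_Tset (X : CliffordAlgebra (Qf p q r)) :
    X ∈ Submodule.span ℝ (Tset p q r) := by
  have one_mem : (1 : CliffordAlgebra (Qf p q r)) ∈ Submodule.span ℝ (Tset p q r) := by
    apply Submodule.subset_span
    exact ⟨[], List.isChain_nil, by unfold prodl; simp⟩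
  have main : ∀ Y ∈ Submodule.span ℝ (Tset p q r),
      X * Y ∈ Submodule.span ℝ (Tset p q r) := by
    induction X using CliffordAlgebra.induction with
    | algebraMap c =>
      intro Y hY
      rw [Algebra.algebraMap_eq_smul_one, smul_mul_assoc, one_mul]
      exact Submodule.smul_mem _ _ hY
    | ι v =>
      intro Y hY
      rw [iota_eq_sum, Finset.sum_mul]
      apply Submodule.sum_mem
      intro i _
      rw [smul_mul_assoc]
      exact Submodule.smul_mem _ _ (gen_mul_mem_span p q r i Y hY)
    | mul a b ha hb =>
      intro Y hY
      rw [mul_assoc]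
      exact ha _ (hb _ hY)
    | add a b ha hb =>
      intro Y hY
      rw [add_mul]
      exact Submodule.add_mem _ (ha _ hY) (hb _ hY)
  simpa using main 1 one_mem

def xS (T : Finset (Fin (p + q + r))) : W p q r := fun S => if S = T then 1 else 0

lemma xS_empty : xS p q r ∅ = x0 p q r := rfl

lemma chain'_sorted {l : List (Fin (p + q + r))} (hc : l.Chain' (· < ·)) :
    l.Pairwise (· < ·) := List.isChain_iff_pairwise.mp hc

lemma chain'_nodup {l : List (Fin (p + q + r))} (hc : l.Chain' (· < ·)) : l.Nodup :=
  (chain'_sorted p q r hc).nodup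

lemma sort_toFinset_eq {l : List (Fin (p + q + r))} (hc : l.Chain' (· < ·)) :
    l.toFinset.sort (· ≤ ·) = l := by
  rw [List.toFinset_sort (· ≤ ·) (chain'_nodup p q r hc)]
  exact (chain'_sorted p q r hc).imp le_of_lt

def ES (S : Finset (Fin (p + q + r))) : CliffordAlgebra (Qf p q r) :=
  prodl p q r (S.sort (· ≤ ·))

lemma ES_empty : ES p q r ∅ = 1 := by
  unfold ES prodl
  simp

lemma ES_chain (S : Finset (Fin (p + q + r))) : (S.sort (· ≤ ·)).Chain' (· < ·) :=
  List.isChain_iff_pairwise.mpr (Finset.sortedLT_sort S).pairwise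

lemma ES_toFinset (S : Finset (Fin (p + q + r))) : (S.sort (· ≤ ·)).toFinset = S :=
  Finset.sort_toFinset S _

lemma op_xS (a : Fin (p + q + r)) (T : Finset (Fin (p + q + r))) (ha : a ∉ T) :
    op p q r a (xS p q r T) = eps p q r a T • xS p q r (insert a T) := by
  funext S
  rw [op_apply, Pi.smul_apply, smul_eq_mul]
  by_cases haS : a ∈ S
  · rw [if_pos haS]
    unfold xS
    by_cases h : S.erase a = T
    · have hS : S = insert a T := by rw [← h, Finset.insert_erase haS]
      rw [if_pos h, if_pos hS, hS]
      rw [eps_insert p q r a a T ha, if_neg (lt_irrefl a), one_mul]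
    · have hS : S ≠ insert a T := by
        intro hc
        apply h
        rw [hc, Finset.erase_insert ha]
      rw [if_neg h, if_neg hS]
      ring
  · rw [if_neg haS]
    unfold xS
    have h1 : insert a S ≠ T := by
      intro hc
      exact ha (hc ▸ Finset.mem_insert_self a S)
    have h2 : S ≠ insert a T := by
      intro hc
      exact haS (hc ▸ Finset.mem_insert_self a T)
    rw [if_neg h1, if_neg h2]
    ring

lemma lam_prodl {l : List (Fin (p + q + r))} (hc : l.Chain' (· < ·)) :
    lam p q r (prodl p q r l) = xS p q r l.toFinset := by
  induction l with
  | nil =>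
    unfold prodl
    simp only [List.map_nil, List.prod_nil, List.toFinset_nil]
    rw [lam_one, xS_empty]
  | cons a t ih =>
    have hct : t.Chain' (· < ·) := hc.tail
    have hmem : ∀ b ∈ t, a < b := by
      intro b hb
      have := List.isChain_iff_pairwise.mp hc
      exact List.rel_of_pairwise_cons this hb
    have hanot : a ∉ t.toFinset := by
      rw [List.mem_toFinset]
      intro hmem2
      exact lt_irrefl a (hmem a hmem2)
    rw [prodl_cons, lam_gen_mul, ih hct, op_xS p q r a t.toFinset hanot]
    have heps : eps p q r a t.toFinset = 1 := by
      unfold eps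
      have : t.toFinset.filter (· < a) = ∅ := by
        apply Finset.filter_false_of_mem
        intro x hx
        rw [List.mem_toFinset] at hx
        exact not_lt_of_gt (hmem x hx)
      rw [this]
      simp
    rw [heps, one_smul, List.toFinset_cons]

lemma lam_ES (S : Finset (Fin (p + q + r))) : lam p q r (ES p q r S) = xS p q r S := by
  rw [ES, lam_prodl p q r (ES_chain p q r S), ES_toFinset]

lemma expansion (X : CliffordAlgebra (Qf p q r)) :
    X = ∑ S : Finset (Fin (p + q + r)), lam p q r X S • ES p q r S := by
  induction (mem_span_Tset p q r X) using Submodule.span_induction with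
  | mem y hy =>
    obtain ⟨l, hcl, rfl⟩ := hy
    rw [lam_prodl p q r hcl]
    unfold xS
    rw [Finset.sum_congr rfl (fun S _ => by
      rw [show ((if S = l.toFinset then (1:ℝ) else 0) • ES p q r S)
        = (if S = l.toFinset then ES p q r S else 0) from by split <;> simp])]
    rw [Finset.sum_ite_eq' Finset.univ l.toFinset (fun S => ES p q r S),
      if_pos (Finset.mem_univ _)]
    rw [ES, sort_toFinset_eq p q r hcl]
  | zero =>
    simp [lam_zero]
  | add y z _ _ hy hz =>
    conv_lhs => rw [hy, hz]
    rw [← Finset.sum_add_distrib]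
    apply Finset.sum_congr rfl
    intro S _
    rw [lam_add, Pi.add_apply, add_smul]
  | smul c y _ hy =>
    conv_lhs => rw [hy]
    rw [Finset.smul_sum]
    apply Finset.sum_congr rfl
    intro S _
    rw [lam_smul, Pi.smul_apply, smul_eq_mul, mul_smul]

lemma lam_inj {X Y : CliffordAlgebra (Qf p q r)} (h : lam p q r X = lam p q r Y) : X = Y := by
  rw [expansion p q r X, expansion p q r Y, h]

lemma involute_prodl (l : List (Fin (p + q + r))) :
    involute (prodl p q r l) = ((-1 : ℝ)) ^ l.length • prodl p q r l := by
  induction l with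
  | nil =>
    unfold prodl
    simp
  | cons a t ih =>
    rw [prodl_cons, map_mul, ih]
    have : involute (gen p q r a) = -gen p q r a := by
      rw [gen, involute_ι]
    rw [this, List.length_cons, pow_succ, neg_mul, mul_smul_comm, mul_smul, neg_one_smul, smul_neg]

lemma lam_involute (X : CliffordAlgebra (Qf p q r)) (S : Finset (Fin (p + q + r))) :
    lam p q r (involute X) S = (-1) ^ S.card * lam p q r X S := by
  induction (mem_span_Tset p q r X) using Submodule.span_induction with
  | mem y hy =>
    obtain ⟨l, hcl, rfl⟩ := hy
    rw [involute_prodl, lam_smul, lam_prodl p q r hcl, Pi.smul_apply, smul_eq_mul]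
    unfold xS
    by_cases h : S = l.toFinset
    · rw [if_pos h, h, List.toFinset_card_of_nodup (chain'_nodup p q r hcl)]
    · rw [if_neg h]
      ring
  | zero =>
    rw [map_zero, lam_zero]
    simp
  | add y z _ _ hy hz =>
    rw [map_add, lam_add, lam_add, Pi.add_apply, Pi.add_apply, hy, hz]
    ring
  | smul c y _ hy =>
    rw [map_smul, lam_smul, lam_smul, Pi.smul_apply, Pi.smul_apply, smul_eq_mul, smul_eq_mul, hy]
    ring

lemma cliffSig_null {i : Fin (p + q + r)} (h : p + q ≤ (i : ℕ)) : cliffSig p q (i : ℕ) = 0 := by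
  unfold cliffSig
  rw [if_neg (by omega), if_neg (by omega)]

lemma cliffSig_nonnull {i : Fin (p + q + r)} (h : (i : ℕ) < p + q) : cliffSig p q (i : ℕ) ≠ 0 := by
  unfold cliffSig
  by_cases h1 : (i : ℕ) < p
  · rw [if_pos h1]; norm_num
  · rw [if_neg h1, if_pos h]; norm_num

lemma lam_gen (j : Fin (p + q + r)) : lam p q r (gen p q r j) = xS p q r {j} := by
  have h1 : gen p q r j = prodl p q r [j] := by
    unfold prodl
    simp
  rw [h1, lam_prodl p q r (List.isChain_singleton j)]
  congr 1

lemma eps_self_mem {i : Fin (p + q + r)} {T : Finset (Fin (p + q + r))} (h : i ∈ T) :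
    eps p q r i T = eps p q r i (T.erase i) := by
  rw [eps_erase p q r i i T h, if_neg (lt_irrefl i), one_mul]

lemma eps'_self_mem {i : Fin (p + q + r)} {T : Finset (Fin (p + q + r))} (h : i ∈ T) :
    eps' p q r i T = eps' p q r i (T.erase i) := by
  rw [eps'_erase p q r i i T h, if_neg (lt_irrefl i), one_mul]

lemma support_odd_of_central (hn : Even (p + q + r)) (X : CliffordAlgebra (Qf p q r))
    (hop : ∀ i, op p q r i (lam p q r X) = rop p q r i (lam p q r X))
    (S : Finset (Fin (p + q + r))) (hodd : Odd S.card) : lam p q r X S = 0 := by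
  have hSne : S ≠ Finset.univ := by
    intro hS
    rw [hS, Finset.card_univ, Fintype.card_fin] at hodd
    exact (Nat.not_odd_iff_even.mpr hn) hodd
  have hex : ∃ i, i ∉ S := by
    by_contra hc
    push_neg at hc
    exact hSne (Finset.eq_univ_iff_forall.mpr hc)
  obtain ⟨i, hi⟩ := hex
  have h := congrFun (hop i) (insert i S)
  rw [op_apply, rop_apply, if_pos (Finset.mem_insert_self i S),
    if_pos (Finset.mem_insert_self i S), Finset.erase_insert hi] at h
  rw [eps_insert p q r i i S hi, eps'_insert p q r i i S hi, if_neg (lt_irrefl i)] at h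
  rw [eps'_eq p q r i S hi, hodd.neg_one_pow] at h
  have h2 : eps p q r i S * (2 * lam p q r X S) = 0 := by linear_combination h
  rcases mul_eq_zero.mp h2 with h3 | h3
  · exact absurd h3 (eps_ne_zero p q r i S)
  · linarith

lemma support_null_of_central (hn : Even (p + q + r)) (X : CliffordAlgebra (Qf p q r))
    (hop : ∀ i, op p q r i (lam p q r X) = rop p q r i (lam p q r X))
    (S : Finset (Fin (p + q + r))) (i : Fin (p + q + r)) (hiS : i ∈ S)
    (hnn : (i : ℕ) < p + q) (heven : Even S.card) : lam p q r X S = 0 := by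
  have hi : i ∉ S.erase i := Finset.notMem_erase i S
  have h := congrFun (hop i) (S.erase i)
  rw [op_apply, rop_apply, if_neg hi, if_neg hi, Finset.insert_erase hiS] at h
  have hcard : Odd (S.erase i).card := by
    rw [Finset.card_erase_of_mem hiS]
    exact Nat.Even.sub_odd (Finset.card_pos.mpr ⟨i, hiS⟩) heven odd_one
  rw [eps'_eq p q r i (S.erase i) hi, hcard.neg_one_pow] at h
  have h2 : cliffSig p q (i : ℕ) * (eps p q r i (S.erase i) * (2 * lam p q r X S)) = 0 := by
    linear_combination h
  rcases mul_eq_zero.mp h2 with h3 | h3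
  · exact absurd h3 (cliffSig_nonnull p q r hnn)
  rcases mul_eq_zero.mp h3 with h4 | h4
  · exact absurd h4 (eps_ne_zero p q r i (S.erase i))
  · linarith

lemma ES_mem_LambdaR {S : Finset (Fin (p + q + r))} (hS : ∀ i ∈ S, p + q ≤ (i : ℕ)) :
    ES p q r S ∈ LambdaR p q r := by
  unfold ES prodl LambdaR
  apply Subalgebra.list_prod_mem
  intro x hx
  rw [List.mem_map] at hx
  obtain ⟨j, hj, rfl⟩ := hx
  rw [Finset.mem_sort] at hj
  exact Algebra.subset_adjoin ⟨j, hS j hj, rfl⟩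

lemma lam_null_of_LambdaR (X : CliffordAlgebra (Qf p q r)) (hX : X ∈ LambdaR p q r) :
    ∀ S : Finset (Fin (p + q + r)), (∃ i ∈ S, (i : ℕ) < p + q) → lam p q r X S = 0 := by
  set Pn : CliffordAlgebra (Qf p q r) → Prop :=
    fun Z => ∀ S : Finset (Fin (p + q + r)), (∃ i ∈ S, (i : ℕ) < p + q) → lam p q r Z S = 0
    with hPn
  suffices h : Pn X ∧ ∀ Y, Pn Y → Pn (Y * X) from h.1
  unfold LambdaR at hX
  induction hX using Algebra.adjoin_induction with
  | mem x hx =>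
    obtain ⟨j, hjn, rfl⟩ := hx
    constructor
    · intro S hS
      rw [lam_gen]
      obtain ⟨i, hiS, hilt⟩ := hS
      unfold xS
      rw [if_neg]
      intro hc
      subst hc
      rw [Finset.mem_singleton] at hiS
      subst hiS
      omega
    · intro Y hY S hS
      rw [lam_mul_gen, rop_apply]
      obtain ⟨i, hiS, hilt⟩ := hS
      by_cases hjS : j ∈ S
      · rw [if_pos hjS]
        have : lam p q r Y (S.erase j) = 0 := by
          apply hY
          refine ⟨i, ?_, hilt⟩
          rw [Finset.mem_erase]
          refine ⟨?_, hiS⟩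
          intro hc
          subst hc
          omega
        rw [this]
        ring
      · rw [if_neg hjS, cliffSig_null p q r hjn]
        ring
  | algebraMap c =>
    constructor
    · intro S hS
      rw [Algebra.algebraMap_eq_smul_one, lam_smul, lam_one]
      obtain ⟨i, hiS, _⟩ := hS
      have : S ≠ ∅ := Finset.ne_empty_of_mem hiS
      unfold x0
      rw [Pi.smul_apply, smul_eq_mul]
      rw [if_neg this]
      ring
    · intro Y hY S hS
      rw [Algebra.algebraMap_eq_smul_one, mul_smul_comm, mul_one, lam_smul,
        Pi.smul_apply, smul_eq_mul, hY S hS]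
      ring
  | add x y hx' hy' ihx ihy =>
    constructor
    · intro S hS
      rw [lam_add, Pi.add_apply, ihx.1 S hS, ihy.1 S hS]
      ring
    · intro Y hY S hS
      rw [mul_add, lam_add, Pi.add_apply, ihx.2 Y hY S hS, ihy.2 Y hY S hS]
      ring
  | mul x y hx' hy' ihx ihy =>
    constructor
    · exact ihy.2 x ihx.1
    · intro Y hY
      have h1 : Pn (Y * x) := ihx.2 Y hY
      have h2 : Pn ((Y * x) * y) := ihy.2 (Y * x) h1
      intro S hS
      rw [← mul_assoc]
      exact h2 S hS

lemma central_of_support (X : CliffordAlgebra (Qf p q r))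
    (h1 : ∀ S : Finset (Fin (p + q + r)), (∃ i ∈ S, (i : ℕ) < p + q) → lam p q r X S = 0)
    (h2 : ∀ S : Finset (Fin (p + q + r)), Odd S.card → lam p q r X S = 0) :
    ∀ Y, X * Y = Y * X := by
  have hgen : ∀ i, X * gen p q r i = gen p q r i * X := by
    intro i
    apply lam_inj
    rw [lam_mul_gen, lam_gen_mul]
    funext T
    rw [op_apply, rop_apply]
    by_cases hiT : i ∈ T
    · rw [if_pos hiT, if_pos hiT]
      by_cases hz : lam p q r X (T.erase i) = 0
      · rw [hz]; ring
      · have hnull : ∀ j ∈ T.erase i, p + q ≤ (j : ℕ) := by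
          intro j hj
          by_contra hc
          exact hz (h1 _ ⟨j, hj, by omega⟩)
        have heven : Even (T.erase i).card := by
          by_contra hc
          exact hz (h2 _ (Nat.not_even_iff_odd.mp hc))
        rw [eps_self_mem p q r hiT, eps'_self_mem p q r hiT,
          eps'_eq p q r i (T.erase i) (Finset.notMem_erase i T), heven.neg_one_pow, one_mul]
    · rw [if_neg hiT, if_neg hiT]
      by_cases hz : lam p q r X (insert i T) = 0
      · rw [hz]; ring
      · have hnull : p + q ≤ (i : ℕ) := by
          by_contra hc
          exact hz (h1 _ ⟨i, Finset.mem_insert_self i T, by omega⟩)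
        rw [cliffSig_null p q r hnull]
        ring
  intro Y
  induction Y using CliffordAlgebra.induction with
  | algebraMap c =>
    rw [← Algebra.commutes]
  | ι v =>
    rw [iota_eq_sum, Finset.mul_sum, Finset.sum_mul]
    apply Finset.sum_congr rfl
    intro i _
    rw [mul_smul_comm, smul_mul_assoc, hgen i]
  | mul a b ha hb =>
    rw [← mul_assoc, ha, mul_assoc, hb, ← mul_assoc]
  | add a b ha hb =>
    rw [mul_add, add_mul, ha, hb]

theorem main (p q r : ℕ) (hn : Even (p + q + r)) (X : CliffordAlgebra (Qf p q r)) :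
    ((∀ Y : CliffordAlgebra (Qf p q r), X * Y = Y * X) ↔
      (X ∈ LambdaR p q r ∧ involute X = X)) ∧
    (r = 0 → ((∀ Y : CliffordAlgebra (Qf p q r), X * Y = Y * X) ↔
      ∃ c : ℝ, X = algebraMap ℝ (CliffordAlgebra (Qf p q r)) c)) := by
  have forward : (∀ Y : CliffordAlgebra (Qf p q r), X * Y = Y * X) →
      (∀ S : Finset (Fin (p + q + r)), (∃ i ∈ S, (i : ℕ) < p + q) → lam p q r X S = 0) ∧
      (∀ S : Finset (Fin (p + q + r)), Odd S.card → lam p q r X S = 0) := by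
    intro hX
    have hop : ∀ i, op p q r i (lam p q r X) = rop p q r i (lam p q r X) := by
      intro i
      rw [← lam_gen_mul, ← lam_mul_gen, ← hX (gen p q r i)]
    constructor
    · intro S hS
      obtain ⟨i, hiS, hilt⟩ := hS
      by_cases heven : Even S.card
      · exact support_null_of_central p q r hn X hop S i hiS hilt heven
      · exact support_odd_of_central p q r hn X hop S (Nat.not_even_iff_odd.mp heven)
    · intro S hodd
      exact support_odd_of_central p q r hn X hop S hodd
  constructor
  · constructor
    · intro hX
      obtain ⟨hs1, hs2⟩ := forward hX
      constructor
      · rw [expansion p q r X]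
        apply Submodule.sum_mem (LambdaR p q r).toSubmodule
        intro S _
        by_cases hz : lam p q r X S = 0
        · rw [hz, zero_smul]
          exact Submodule.zero_mem _
        · apply Submodule.smul_mem
          apply ES_mem_LambdaR
          intro i hiS
          by_contra hc
          exact hz (hs1 S ⟨i, hiS, by omega⟩)
      · apply lam_inj
        funext S
        rw [lam_involute]
        by_cases heven : Even S.card
        · rw [heven.neg_one_pow, one_mul]
        · rw [hs2 S (Nat.not_even_iff_odd.mp heven)]
          ring
    · rintro ⟨hmem, hinv⟩
      apply central_of_support
      · exact lam_null_of_LambdaR p q r X hmem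
      · intro S hodd
        have h := lam_involute p q r X S
        rw [hinv, hodd.neg_one_pow] at h
        linarith
  · intro hr
    constructor
    · intro hX
      obtain ⟨hs1, hs2⟩ := forward hX
      refine ⟨lam p q r X ∅, ?_⟩
      have hzero : ∀ S : Finset (Fin (p + q + r)), S ≠ ∅ → lam p q r X S = 0 := by
        intro S hS
        obtain ⟨i, hiS⟩ := Finset.nonempty_iff_ne_empty.mpr hS
        apply hs1 S
        refine ⟨i, hiS, ?_⟩
        have := i.isLt
        omega
      rw [expansion p q r X]
      rw [Finset.sum_eq_single ∅]
      · rw [ES_empty, Algebra.algebraMap_eq_smul_one]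
        congr 1
        rw [lam_smul, lam_one, Pi.smul_apply, smul_eq_mul]
        unfold x0
        rw [if_pos rfl, mul_one]
      · intro S _ hS
        rw [hzero S hS, zero_smul]
      · intro h
        exact absurd (Finset.mem_univ ∅) h
    · rintro ⟨c, rfl⟩
      intro Y
      rw [← Algebra.commutes]

end Stmt15

/-- For `n = p + q + r` even, the center of `Cl(p,q,r)` is the even part of `Λ_r`.
In particular, for a non-degenerate form (`r = 0`) of even dimension the center consists
only of the scalars. -/
theorem stmt15 (p q r : ℕ) (hn : Even (p + q + r)) (X : CliffordAlgebra (Qf p q r)) :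
    ((∀ Y : CliffordAlgebra (Qf p q r), X * Y = Y * X) ↔
      (X ∈ LambdaR p q r ∧ involute X = X)) ∧
    (r = 0 → ((∀ Y : CliffordAlgebra (Qf p q r), X * Y = Y * X) ↔
      ∃ c : ℝ, X = algebraMap ℝ (CliffordAlgebra (Qf p q r)) c)) :=
  Stmt15.main p q r hn X
end
end

section
/- Let Cl(p,q,r) be a Clifford algebra with n = p+q+r. For odd m with 1 ≤ m ≤ n−2, the centralizer of the grade-m subspace is contained in the centralizer of the grade-(m+2) subspace, and the twisted centralizer of the grade-m subspace is contained in the twisted centralizer of the grade-(m+2) subspace. -/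
open CliffordAlgebra

noncomputable section

open Finset

namespace S17

variable {n : ℕ} (w : Fin n → ℝ)

abbrev Fk (n : ℕ) := Finset (Fin n) → ℝ

def sg (i : Fin n) (S : Finset (Fin n)) : ℝ := (-1) ^ (S.filter (· < i)).card

def tog (i : Fin n) (S : Finset (Fin n)) : Finset (Fin n) :=
  if i ∈ S then S.erase i else insert i S

def wf (i : Fin n) (S : Finset (Fin n)) : ℝ := if i ∈ S then 1 else w i

lemma tog_eq (i : Fin n) (S : Finset (Fin n)) : tog i S = symmDiff {i} S := by
  by_cases h : i ∈ S <;>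
    · ext a
      by_cases ha : a = i <;> simp [tog, h, ha, Finset.mem_symmDiff]

lemma tog_tog_self (i : Fin n) (S : Finset (Fin n)) : tog i (tog i S) = S := by
  rw [tog_eq, tog_eq, symmDiff_symmDiff_cancel_left]

lemma tog_comm {i j : Fin n} (S : Finset (Fin n)) :
    tog j (tog i S) = tog i (tog j S) := by
  rw [tog_eq, tog_eq, tog_eq, tog_eq, symmDiff_left_comm]

lemma mem_tog_self (i : Fin n) (S : Finset (Fin n)) : i ∈ tog i S ↔ i ∉ S := by
  simp [tog_eq, Finset.mem_symmDiff]

lemma mem_tog_other {i j : Fin n} (h : j ≠ i) (S : Finset (Fin n)) :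
    j ∈ tog i S ↔ j ∈ S := by
  simp [tog_eq, Finset.mem_symmDiff, h]

lemma sg_sq (i : Fin n) (S : Finset (Fin n)) : sg i S * sg i S = 1 := by
  rw [sg, ← pow_add]
  exact Even.neg_one_pow ⟨_, rfl⟩

lemma sg_tog_self (i : Fin n) (S : Finset (Fin n)) : sg i (tog i S) = sg i S := by
  have h : (tog i S).filter (· < i) = S.filter (· < i) := by
    ext a
    simp only [Finset.mem_filter, and_congr_left_iff]
    intro ha
    exact mem_tog_other (ne_of_lt ha) S
  rw [sg, h, sg]

lemma sg_tog_ne {i j : Fin n} (h : i ≠ j) (S : Finset (Fin n)) :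
    sg j (tog i S) = (if i < j then -1 else 1) * sg j S := by
  by_cases hij : i < j
  · have hfil : (tog i S).filter (· < j) = tog i (S.filter (· < j)) := by
      ext a
      by_cases ha : a = i
      · subst ha
        simp [mem_tog_self, hij]
      · simp [mem_tog_other ha, Finset.mem_filter, mem_tog_other ha]
    rw [sg, hfil, if_pos hij]
    by_cases hmem : i ∈ S.filter (· < j)
    · rw [tog, if_pos hmem, Finset.card_erase_of_mem hmem]
      obtain ⟨k, hk⟩ : ∃ k, (S.filter (· < j)).card = k + 1 :=
        ⟨(S.filter (· < j)).card - 1, by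
          have : 0 < (S.filter (· < j)).card := Finset.card_pos.mpr ⟨i, hmem⟩
          omega⟩
      rw [sg, hk]
      simp [pow_succ]
    · rw [tog, if_neg hmem, Finset.card_insert_of_notMem hmem, sg, pow_succ]
      ring
  · have hfil : (tog i S).filter (· < j) = S.filter (· < j) := by
      ext a
      simp only [Finset.mem_filter, and_congr_left_iff]
      intro ha
      have : a ≠ i := by rintro rfl; exact hij ha
      exact mem_tog_other this S
    rw [sg, hfil, if_neg hij, one_mul, sg]

lemma wf_tog_ne {i j : Fin n} (h : j ≠ i) (S : Finset (Fin n)) :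
    wf w j (tog i S) = wf w j S := by
  simp only [wf, mem_tog_other h]

lemma wf_mul_wf_tog (i : Fin n) (S : Finset (Fin n)) :
    wf w i S * wf w i (tog i S) = w i := by
  by_cases h : i ∈ S
  · rw [wf, if_pos h, wf, if_neg (by rw [mem_tog_self]; simpa), one_mul]
  · rw [wf, if_neg h, wf, if_pos (by rw [mem_tog_self]; simpa), mul_one]



def Lf (x : Fin n → ℝ) (f : Fk n) : Fk n :=
  fun S => ∑ i, x i * (wf w i S * sg i S * f (tog i S))

def Lop : (Fin n → ℝ) →ₗ[ℝ] Module.End ℝ (Fk n) where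
  toFun x :=
    { toFun := Lf w x
      map_add' := by
        intro f g
        funext S
        simp only [Lf, Pi.add_apply, ← Finset.sum_add_distrib]
        exact Finset.sum_congr rfl fun i _ => by ring
      map_smul' := by
        intro c f
        funext S
        simp only [Lf, Pi.smul_apply, smul_eq_mul, RingHom.id_apply, Finset.mul_sum]
        exact Finset.sum_congr rfl fun i _ => by ring }
  map_add' := by
    intro x y
    apply LinearMap.ext
    intro f
    funext S
    simp only [LinearMap.coe_mk, AddHom.coe_mk, LinearMap.add_apply, Pi.add_apply, Lf,
      ← Finset.sum_add_distrib]
    exact Finset.sum_congr rfl fun i _ => by ring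
  map_smul' := by
    intro c x
    apply LinearMap.ext
    intro f
    funext S
    simp only [LinearMap.coe_mk, AddHom.coe_mk, RingHom.id_apply, LinearMap.smul_apply,
      Pi.smul_apply, smul_eq_mul, Lf, Finset.mul_sum]
    exact Finset.sum_congr rfl fun i _ => by ring

lemma Lsq (x : Fin n → ℝ) :
    Lop w x * Lop w x =
      algebraMap ℝ (Module.End ℝ (Fk n)) (QuadraticMap.weightedSumSquares ℝ w x) := by
  apply LinearMap.ext
  intro f
  funext S
  have hrhs : (algebraMap ℝ (Module.End ℝ (Fk n)) (QuadraticMap.weightedSumSquares ℝ w x)) f S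
      = ∑ i, w i * (x i * x i) * f S := by
    rw [Module.algebraMap_end_apply, QuadraticMap.weightedSumSquares_apply]
    simp only [smul_eq_mul, Pi.smul_apply]
    rw [← Finset.sum_mul]
  rw [hrhs]
  set t : Fin n → Fin n → ℝ := fun i j =>
    x i * (wf w i S * sg i S *
      (x j * (wf w j (tog i S) * sg j (tog i S) * f (tog j (tog i S))))) with ht
  have hlhs : (Lop w x * Lop w x) f S = ∑ i, ∑ j, t i j := by
    show Lf w x (Lf w x f) S = _
    unfold Lf
    refine Finset.sum_congr rfl fun i _ => ?_
    rw [Finset.mul_sum, Finset.mul_sum]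
  rw [hlhs]
  have hsplit : ∀ i, ∑ j, t i j = t i i + ∑ j, if j = i then 0 else t i j := by
    intro i
    have : ∑ j, t i j = ∑ j, ((if j = i then t i j else 0) + (if j = i then 0 else t i j)) :=
      Finset.sum_congr rfl fun j _ => by split <;> ring
    rw [this, Finset.sum_add_distrib, Finset.sum_ite_eq' Finset.univ i (t i)]
    simp
  have hdiag : ∀ i, t i i = w i * (x i * x i) * f S := by
    intro i
    have h1 : t i i = (x i * x i) * ((wf w i S * wf w i (tog i S)) *
        (sg i S * sg i (tog i S))) * f (tog i (tog i S)) := by rw [ht]; ring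
    rw [h1, tog_tog_self, sg_tog_self, sg_sq, wf_mul_wf_tog]
    ring
  have hcancel : ∀ i j : Fin n, j ≠ i → t i j + t j i = 0 := by
    intro i j hji
    have hij : i ≠ j := hji.symm
    rw [ht]
    simp only
    rw [wf_tog_ne w hji, wf_tog_ne w hij, sg_tog_ne hij, sg_tog_ne hji, tog_comm (i := i) (j := j)]
    rcases hij.lt_or_gt with h | h
    · rw [if_pos h, if_neg (not_lt_of_gt h)]
      ring
    · rw [if_neg (not_lt_of_gt h), if_pos h]
      ring
  have hoff : ∑ i, ∑ j, (if j = i then 0 else t i j) = 0 := by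
    rw [← Fintype.sum_prod_type (f := fun z : Fin n × Fin n => if z.2 = z.1 then 0 else t z.1 z.2)]
    apply Finset.sum_ninvolution Prod.swap
    · intro z
      by_cases hz : z.2 = z.1
      · simp [hz]
      · have hz' : ¬ (z.1 = z.2) := fun h => hz h.symm
        rw [Prod.snd_swap, Prod.fst_swap, if_neg hz, if_neg hz']
        exact hcancel z.1 z.2 hz
    · intro z hne hswap
      apply hne
      have h1 : z.2 = z.1 := congrArg Prod.fst hswap
      simp [h1]
    · intro z; exact Finset.mem_univ _
    · intro z; exact Prod.swap_swap z
  calc ∑ i, ∑ j, t i j = ∑ i, (t i i + ∑ j, if j = i then 0 else t i j) :=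
        Finset.sum_congr rfl fun i _ => hsplit i
    _ = ∑ i, t i i + ∑ i, ∑ j, (if j = i then 0 else t i j) := Finset.sum_add_distrib
    _ = ∑ i, t i i + 0 := by rw [hoff]
    _ = ∑ i, w i * (x i * x i) * f S := by
        rw [add_zero]
        exact Finset.sum_congr rfl fun i _ => hdiag i

def Qw : QuadraticForm ℝ (Fin n → ℝ) := QuadraticMap.weightedSumSquares ℝ w

def gw (i : Fin n) : CliffordAlgebra (Qw w) := ι (Qw w) (Pi.single i 1)

def rho : CliffordAlgebra (Qw w) →ₐ[ℝ] Module.End ℝ (Fk n) :=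
  lift (Qw w) ⟨Lop w, fun x => by rw [Qw]; exact Lsq w x⟩

def db (A : Finset (Fin n)) : Fk n := fun S => if S = A then 1 else 0

lemma rho_gen (i : Fin n) (A : Finset (Fin n)) :
    rho w (gw w i) (db A) = ((if i ∈ A then w i else 1) * sg i A) • db (tog i A) := by
  rw [rho, gw, lift_ι_apply]
  funext S
  show Lf w (Pi.single i 1) (db A) S = _
  rw [Lf, Finset.sum_eq_single i ?h1 ?h2]
  case h1 =>
    intro j _ hji
    rw [Pi.single_eq_of_ne hji, zero_mul]
  case h2 => intro h; exact absurd (Finset.mem_univ i) h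
  rw [Pi.single_eq_same, one_mul]
  show wf w i S * sg i S * db A (tog i S) = _
  by_cases h : S = tog i A
  · subst h
    rw [tog_tog_self, Pi.smul_apply, smul_eq_mul]
    show wf w i (tog i A) * sg i (tog i A) * db A A = _ * db (tog i A) (tog i A)
    rw [db, if_pos rfl, db, if_pos rfl, sg_tog_self]
    by_cases hA : i ∈ A
    · rw [wf, if_neg (by rw [mem_tog_self]; simpa), if_pos hA]
    · rw [wf, if_pos (by rw [mem_tog_self]; simpa), if_neg hA]
  · have h2 : tog i S ≠ A := by
      intro h3
      apply h
      rw [← h3, tog_tog_self]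
    rw [Pi.smul_apply, smul_eq_mul]
    show wf w i S * sg i S * db A (tog i S) = _ * db (tog i A) S
    rw [db, if_neg h2, db, if_neg h, mul_zero, mul_zero]

def pl (l : List (Fin n)) : CliffordAlgebra (Qw w) := (l.map (gw w)).prod

def togL (l : List (Fin n)) (A : Finset (Fin n)) : Finset (Fin n) := l.foldr tog A

def lam : List (Fin n) → Finset (Fin n) → ℝ
  | [], _ => 1
  | i :: t, A => ((if i ∈ togL t A then w i else 1) * sg i (togL t A)) * lam t A

lemma rho_pl (l : List (Fin n)) (A : Finset (Fin n)) :
    rho w (pl w l) (db A) = lam w l A • db (togL l A) := by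
  induction l with
  | nil => simp [pl, lam, togL, db]
  | cons i t ih =>
    have h1 : pl w (i :: t) = gw w i * pl w t := by simp [pl]
    rw [h1, map_mul, Module.End.mul_apply, ih, map_smul, rho_gen, smul_smul]
    show _ = (((if i ∈ togL t A then w i else 1) * sg i (togL t A)) * lam w t A) •
      db (tog i (togL t A))
    rw [mul_comm]

lemma singleton_symmDiff {i : Fin n} {T : Finset (Fin n)} (h : i ∉ T) :
    symmDiff ({i} : Finset (Fin n)) T = insert i T := by
  ext a
  by_cases ha : a = i <;> simp [Finset.mem_symmDiff, ha, h]

lemma togL_eq (l : List (Fin n)) (hl : l.Nodup) (A : Finset (Fin n)) :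
    togL l A = symmDiff l.toFinset A := by
  induction l with
  | nil =>
    show A = symmDiff (List.toFinset []) A
    rw [List.toFinset_nil, show (∅ : Finset (Fin n)) = (⊥ : Finset (Fin n)) from rfl,
      bot_symmDiff]
  | cons i t ih =>
    have hnd := List.nodup_cons.mp hl
    have h1 : togL (i :: t) A = tog i (togL t A) := rfl
    rw [h1, ih hnd.2, tog_eq, ← symmDiff_assoc,
      singleton_symmDiff (by simpa using hnd.1), List.toFinset_cons]

def ccnt (A I : Finset (Fin n)) : ℕ := ∑ i ∈ I, (A.filter (· < i)).card

def Wp (A : Finset (Fin n)) : ℝ := ∏ i ∈ A, w i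

def Lam (I A : Finset (Fin n)) : ℝ := Wp w (I ∩ A) * (-1) ^ ccnt A I

lemma lam_sorted (l : List (Fin n)) (hl : l.Chain' (· < ·)) (A : Finset (Fin n)) :
    lam w l A = Wp w (l.toFinset ∩ A) * (-1) ^ ccnt A l.toFinset := by
  induction l with
  | nil => simp [lam, Wp, ccnt]
  | cons i t ih =>
    have hp : List.Pairwise (· < ·) (i :: t) := List.isChain_iff_pairwise.mp hl
    have hlt : ∀ z ∈ t, i < z := (List.pairwise_cons.mp hp).1
    have htp : List.Pairwise (· < ·) t := (List.pairwise_cons.mp hp).2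
    have htnd : t.Nodup := htp.imp ne_of_lt
    have hint : i ∉ t.toFinset := by
      simp only [List.mem_toFinset]
      intro hmem
      exact lt_irrefl i (hlt i hmem)
    have htog : togL t A = symmDiff t.toFinset A := togL_eq t htnd A
    have hmem : i ∈ togL t A ↔ i ∈ A := by
      rw [htog, Finset.mem_symmDiff]
      constructor
      · rintro (⟨h1, _⟩ | ⟨h1, _⟩)
        · exact absurd h1 hint
        · exact h1
      · intro h1
        exact Or.inr ⟨h1, hint⟩
    have hfil : (togL t A).filter (· < i) = A.filter (· < i) := by
      rw [htog]
      ext a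
      simp only [Finset.mem_filter, and_congr_left_iff, Finset.mem_symmDiff]
      intro ha
      have hat : a ∉ t.toFinset := by
        simp only [List.mem_toFinset]
        intro hmem2
        exact absurd (hlt a hmem2) (not_lt_of_gt ha)
      constructor
      · rintro (⟨h1, _⟩ | ⟨h1, _⟩)
        · exact absurd h1 hat
        · exact h1
      · intro h1
        exact Or.inr ⟨h1, hat⟩
    have hsg : sg i (togL t A) = (-1 : ℝ) ^ (A.filter (· < i)).card := by rw [sg, hfil]
    have hchain : t.Chain' (· < ·) := List.isChain_iff_pairwise.mpr htp
    show ((if i ∈ togL t A then w i else 1) * sg i (togL t A)) * lam w t A = _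
    rw [hsg, ih hchain, List.toFinset_cons]
    have hccnt : ccnt A (insert i t.toFinset) = (A.filter (· < i)).card + ccnt A t.toFinset := by
      rw [ccnt, Finset.sum_insert hint]; rfl
    rw [hccnt, pow_add]
    by_cases hA : i ∈ A
    · rw [if_pos (hmem.mpr hA)]
      have h3 : insert i t.toFinset ∩ A = insert i (t.toFinset ∩ A) :=
        Finset.insert_inter_of_mem hA
      simp only [Wp, h3]
      rw [Finset.prod_insert (fun hmem2 => hint (Finset.mem_of_mem_inter_left hmem2))]
      ring
    · rw [if_neg (fun h => hA (hmem.mp h))]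
      have : insert i t.toFinset ∩ A = t.toFinset ∩ A := Finset.insert_inter_of_notMem hA
      rw [this]
      ring

def Emon (I : Finset (Fin n)) : CliffordAlgebra (Qw w) := pl w (I.sort (· ≤ ·))

lemma sort_chain' (I : Finset (Fin n)) : (I.sort (· ≤ ·)).Chain' (· < ·) :=
  List.isChain_iff_pairwise.mpr (Finset.sortedLT_sort I).pairwise

lemma rho_Emon (I A : Finset (Fin n)) :
    rho w (Emon w I) (db A) = Lam w I A • db (symmDiff I A) := by
  rw [Emon, rho_pl, lam_sorted w _ (sort_chain' I),
    togL_eq _ (Finset.sort_nodup I _), Finset.sort_toFinset, Lam]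

def Tv : CliffordAlgebra (Qw w) →ₗ[ℝ] Fk n where
  toFun X := rho w X (db ∅)
  map_add' := by intro a b; simp only [map_add, LinearMap.add_apply]
  map_smul' := by intro c a; simp only [map_smul, LinearMap.smul_apply, RingHom.id_apply]

lemma Tv_Emon (I : Finset (Fin n)) : Tv w (Emon w I) = db I := by
  show rho w (Emon w I) (db ∅) = db I
  rw [rho_Emon]
  have h1 : Lam w I ∅ = 1 := by simp [Lam, Wp, ccnt]
  have h2 : symmDiff I (∅ : Finset (Fin n)) = I := by
    rw [show (∅ : Finset (Fin n)) = (⊥ : Finset (Fin n)) from rfl, symmDiff_bot]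
  rw [h1, h2, one_smul]

lemma Tv_Emon_mul (I K : Finset (Fin n)) :
    Tv w (Emon w I * Emon w K) = Lam w I K • db (symmDiff I K) := by
  show rho w (Emon w I * Emon w K) (db ∅) = _
  rw [map_mul, Module.End.mul_apply]
  have h1 : rho w (Emon w K) (db ∅) = db K := Tv_Emon w K
  rw [h1, rho_Emon]

lemma Qw_single (i : Fin n) : Qw w (Pi.single i 1) = w i := by
  rw [Qw, QuadraticMap.weightedSumSquares_apply]
  rw [Finset.sum_eq_single i ?h1 ?h2]
  · rw [Pi.single_eq_same, mul_one, smul_eq_mul, mul_one]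
  case h1 =>
    intro j _ hji
    rw [Pi.single_eq_of_ne hji, mul_zero, smul_eq_mul, mul_zero]
  case h2 => intro h; exact absurd (Finset.mem_univ i) h

lemma ortho_single {i j : Fin n} (h : i ≠ j) :
    (Qw w).IsOrtho (Pi.single i 1) (Pi.single j 1) := by
  rw [QuadraticMap.isOrtho_def, Qw, QuadraticMap.weightedSumSquares_apply,
    QuadraticMap.weightedSumSquares_apply, QuadraticMap.weightedSumSquares_apply,
    ← Finset.sum_add_distrib]
  refine Finset.sum_congr rfl fun k _ => ?_
  have h1 : (Pi.single i 1 : Fin n → ℝ) k * (Pi.single j 1 : Fin n → ℝ) k = 0 := by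
    by_cases hk : k = i
    · subst hk
      rw [Pi.single_eq_of_ne h, mul_zero]
    · rw [Pi.single_eq_of_ne hk, zero_mul]
  simp only [Pi.add_apply, smul_eq_mul]
  linear_combination (2 * w k) * h1

lemma gw_sq (i : Fin n) : gw w i * gw w i = algebraMap ℝ _ (w i) := by
  rw [gw, ι_sq_scalar, Qw_single]

lemma gw_mul_pl : ∀ l : List (Fin n), l.Chain' (· < ·) → ∀ i : Fin n,
    gw w i * pl w l ∈ Submodule.span ℝ
      {x | ∃ l' : List (Fin n), l'.Chain' (· < ·) ∧ (∀ z ∈ l', z ∈ i :: l) ∧ x = pl w l'} := by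
  intro l
  induction l with
  | nil =>
    intro _ i
    apply Submodule.subset_span
    exact ⟨[i], List.isChain_singleton i, by simp, by simp [pl]⟩
  | cons j t ih =>
    intro hl i
    rcases lt_trichotomy i j with hij | hij | hij
    · apply Submodule.subset_span
      refine ⟨i :: j :: t, List.isChain_cons_cons.mpr ⟨hij, hl⟩, fun z hz => hz, by simp [pl]⟩
    · subst hij
      have hkey : gw w i * pl w (i :: t) = w i • pl w t := by
        have : pl w (i :: t) = gw w i * pl w t := by simp [pl]
        rw [this, ← mul_assoc, gw_sq, Algebra.smul_def]
      rw [hkey]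
      exact Submodule.smul_mem _ _ (Submodule.subset_span
        ⟨t, hl.tail, fun z hz => List.mem_cons_of_mem _ (List.mem_cons_of_mem _ hz), rfl⟩)
    · have hkey : gw w i * pl w (j :: t) = -(gw w j * (gw w i * pl w t)) := by
        have h1 : pl w (j :: t) = gw w j * pl w t := by simp [pl]
        rw [h1]
        exact ι_mul_ι_mul_of_isOrtho _ (ortho_single w (ne_of_gt hij))
      rw [hkey]
      apply Submodule.neg_mem
      have ht : t.Chain' (· < ·) := hl.tail
      have hjt : ∀ z ∈ t, j < z :=
        (List.pairwise_cons.mp (List.isChain_iff_pairwise.mp hl)).1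
      have hmem := ih ht i
      have hle : Submodule.span ℝ
          {x | ∃ l' : List (Fin n), l'.Chain' (· < ·) ∧ (∀ z ∈ l', z ∈ i :: t) ∧ x = pl w l'} ≤
          Submodule.comap (LinearMap.mulLeft ℝ (gw w j)) (Submodule.span ℝ
          {x | ∃ l' : List (Fin n), l'.Chain' (· < ·) ∧ (∀ z ∈ l', z ∈ i :: j :: t) ∧
            x = pl w l'}) := by
        rw [Submodule.span_le]
        rintro x ⟨l', hc, hsub, rfl⟩
        simp only [SetLike.mem_coe, Submodule.mem_comap, LinearMap.mulLeft_apply]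
        apply Submodule.subset_span
        refine ⟨j :: l', ?_, ?_, by simp [pl]⟩
        · unfold List.Chain' at hc ⊢
          rw [List.isChain_iff_pairwise] at hc ⊢
          refine List.pairwise_cons.mpr ⟨?_, hc⟩
          intro z hz
          rcases List.mem_cons.mp (hsub z hz) with h | h
          · exact h ▸ hij
          · exact hjt z h
        · intro z hz
          rcases List.mem_cons.mp hz with h | h
          · exact h ▸ List.mem_cons_of_mem _ (List.mem_cons_self)
          · rcases List.mem_cons.mp (hsub z h) with h2 | h2
            · exact h2 ▸ List.mem_cons_self
            · exact List.mem_cons_of_mem _ (List.mem_cons_of_mem _ h2)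
      exact hle hmem

def MSpan : Submodule ℝ (CliffordAlgebra (Qw w)) :=
  Submodule.span ℝ {x | ∃ l : List (Fin n), l.Chain' (· < ·) ∧ x = pl w l}

lemma gw_mul_mem (i : Fin n) {X : CliffordAlgebra (Qw w)} (hX : X ∈ MSpan w) :
    gw w i * X ∈ MSpan w := by
  have hle : MSpan w ≤ Submodule.comap (LinearMap.mulLeft ℝ (gw w i)) (MSpan w) := by
    rw [MSpan, Submodule.span_le]
    rintro x ⟨l, hc, rfl⟩
    simp only [SetLike.mem_coe, Submodule.mem_comap, LinearMap.mulLeft_apply]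
    refine Submodule.span_mono ?_ (gw_mul_pl w l hc i)
    rintro y ⟨l', hc', _, rfl⟩
    exact ⟨l', hc', rfl⟩
  exact hle hX

lemma pl_mul_mem : ∀ l : List (Fin n), ∀ {X : CliffordAlgebra (Qw w)}, X ∈ MSpan w →
    pl w l * X ∈ MSpan w := by
  intro l
  induction l with
  | nil => intro X hX; rw [show pl w [] = 1 from rfl, one_mul]; exact hX
  | cons i t ih =>
    intro X hX
    have h1 : pl w (i :: t) * X = gw w i * (pl w t * X) := by
      simp [pl, mul_assoc]
    rw [h1]
    exact gw_mul_mem w i (ih hX)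

lemma one_mem_MSpan : (1 : CliffordAlgebra (Qw w)) ∈ MSpan w :=
  Submodule.subset_span ⟨[], List.isChain_nil, by simp [pl]⟩

lemma mem_MSpan (X : CliffordAlgebra (Qw w)) : X ∈ MSpan w := by
  induction X using CliffordAlgebra.induction with
  | algebraMap r =>
    rw [Algebra.algebraMap_eq_smul_one]
    exact Submodule.smul_mem _ _ (one_mem_MSpan w)
  | ι v =>
    have hv : v = ∑ i, Pi.single i (v i) := (Finset.univ_sum_single v).symm
    have : ι (Qw w) v = ∑ i, v i • gw w i := by
      conv_lhs => rw [hv]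
      rw [map_sum]
      refine Finset.sum_congr rfl fun i _ => ?_
      have h2 : Pi.single i (v i) = v i • (Pi.single i 1 : Fin n → ℝ) := by
        funext k
        by_cases hk : k = i
        · subst hk
          rw [Pi.single_eq_same, Pi.smul_apply, Pi.single_eq_same, smul_eq_mul, mul_one]
        · rw [Pi.single_eq_of_ne hk, Pi.smul_apply, Pi.single_eq_of_ne hk, smul_eq_mul, mul_zero]
      rw [h2, map_smul, gw]
    rw [this]
    refine Submodule.sum_mem _ fun i _ => Submodule.smul_mem _ _ ?_
    exact Submodule.subset_span ⟨[i], List.isChain_singleton i, by simp [pl]⟩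
  | mul a b ha hb =>
    refine Submodule.span_induction (p := fun x _ => x * b ∈ MSpan w) ?_ ?_ ?_ ?_ ha
    · rintro x ⟨l, hc, rfl⟩
      exact pl_mul_mem w l hb
    · show (0 : CliffordAlgebra (Qw w)) * b ∈ MSpan w
      rw [zero_mul]; exact Submodule.zero_mem _
    · intro x y _ _ hx hy
      show (x + y) * b ∈ MSpan w
      rw [add_mul]; exact Submodule.add_mem _ hx hy
    · intro c x _ hx
      show (c • x) * b ∈ MSpan w
      rw [smul_mul_assoc]; exact Submodule.smul_mem _ _ hx
  | add a b ha hb => exact Submodule.add_mem _ ha hb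

lemma Emon_toFinset (l : List (Fin n)) (hc : l.Chain' (· < ·)) :
    Emon w l.toFinset = pl w l := by
  have hp := List.isChain_iff_pairwise.mp hc
  have hnd : l.Nodup := hp.imp ne_of_lt
  have hsorted : l.Pairwise (· ≤ ·) := hp.imp le_of_lt
  rw [Emon, (List.toFinset_sort (· ≤ ·) hnd).mpr hsorted]

lemma mem_spanEmon (X : CliffordAlgebra (Qw w)) :
    X ∈ Submodule.span ℝ (Set.range (Emon w)) := by
  have h1 : MSpan w ≤ Submodule.span ℝ (Set.range (Emon w)) := by
    rw [MSpan, Submodule.span_le]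
    rintro x ⟨l, hc, rfl⟩
    exact Submodule.subset_span ⟨l.toFinset, Emon_toFinset w l hc⟩
  exact h1 (mem_MSpan w X)

lemma exists_coeffs (X : CliffordAlgebra (Qw w)) :
    ∃ c : Finset (Fin n) → ℝ, X = ∑ I, c I • Emon w I := by
  have := mem_spanEmon w X
  rw [Submodule.mem_span_range_iff_exists_fun] at this
  obtain ⟨c, hc⟩ := this
  exact ⟨c, hc.symm⟩

lemma db_coords {c : Finset (Fin n) → ℝ} (h : ∑ I, c I • db I = (0 : Fk n))
    (A : Finset (Fin n)) : c A = 0 := by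
  have h1 := congrFun h A
  rw [Finset.sum_apply] at h1
  have h2 : ∀ I : Finset (Fin n), (c I • db I) A = if A = I then c I else 0 := by
    intro I
    rw [Pi.smul_apply, smul_eq_mul, db]
    split <;> simp
  rw [Finset.sum_congr rfl fun I _ => h2 I] at h1
  rw [Finset.sum_ite_eq Finset.univ A c] at h1
  simpa using h1

lemma eq_zero_of_Tv {X : CliffordAlgebra (Qw w)} (h : Tv w X = 0) : X = 0 := by
  obtain ⟨c, rfl⟩ := exists_coeffs w X
  have h2 : ∑ I, c I • db I = (0 : Fk n) := by
    rw [← h, map_sum]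
    exact Finset.sum_congr rfl fun I _ => by rw [map_smul, Tv_Emon]
  have h3 := db_coords h2
  refine Finset.sum_eq_zero fun I _ => by rw [h3 I, zero_smul]

lemma neg_one_pow_eq_iff (s t : ℕ) : ((-1 : ℝ) ^ s = (-1) ^ t) ↔ Even (s + t) := by
  rcases Nat.even_or_odd s with hs | hs <;> rcases Nat.even_or_odd t with ht | ht
  · rw [hs.neg_one_pow, ht.neg_one_pow]
    exact iff_of_true rfl (Nat.even_add.mpr (iff_of_true hs ht))
  · rw [hs.neg_one_pow, ht.neg_one_pow]
    exact iff_of_false (by norm_num)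
      (fun h => (Nat.not_even_iff_odd.mpr ht) ((Nat.even_add.mp h).mp hs))
  · rw [hs.neg_one_pow, ht.neg_one_pow]
    exact iff_of_false (by norm_num)
      (fun h => (Nat.not_even_iff_odd.mpr hs) ((Nat.even_add.mp h).mpr ht))
  · rw [hs.neg_one_pow, ht.neg_one_pow]
    exact iff_of_true rfl (Nat.even_add.mpr
      (iff_of_false (Nat.not_even_iff_odd.mpr hs) (Nat.not_even_iff_odd.mpr ht)))

lemma cc_add_cc (I K : Finset (Fin n)) :
    ccnt K I + ccnt I K + (I ∩ K).card = I.card * K.card := by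
  have h1 : ccnt K I = ∑ i ∈ I, ∑ a ∈ K, if a < i then 1 else 0 :=
    Finset.sum_congr rfl fun i _ => Finset.card_filter _ _
  have h2 : ccnt I K = ∑ i ∈ I, ∑ a ∈ K, if i < a then 1 else 0 := by
    rw [ccnt]
    rw [show ∑ a ∈ K, (I.filter (· < a)).card = ∑ a ∈ K, ∑ i ∈ I, if i < a then 1 else 0 from
      Finset.sum_congr rfl fun a _ => Finset.card_filter _ _]
    exact Finset.sum_comm
  have h3 : (I ∩ K).card = ∑ i ∈ I, ∑ a ∈ K, if a = i then 1 else 0 := by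
    rw [← Finset.filter_mem_eq_inter, Finset.card_filter]
    refine Finset.sum_congr rfl fun i _ => ?_
    rw [Finset.sum_ite_eq' K i (fun _ => (1 : ℕ))]
  rw [h1, h2, h3, ← Finset.sum_add_distrib, ← Finset.sum_add_distrib]
  have h4 : ∀ i ∈ I, ((∑ a ∈ K, if a < i then 1 else 0) + (∑ a ∈ K, if i < a then 1 else 0)
      + ∑ a ∈ K, if a = i then 1 else 0) = K.card := by
    intro i _
    rw [← Finset.sum_add_distrib, ← Finset.sum_add_distrib, Finset.card_eq_sum_ones]
    refine Finset.sum_congr rfl fun a _ => ?_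
    rcases lt_trichotomy a i with h | h | h
    · rw [if_pos h, if_neg (not_lt_of_gt h), if_neg (ne_of_lt h)]
    · rw [if_neg (by rw [h]; exact lt_irrefl i), if_neg (by rw [h]; exact lt_irrefl i), if_pos h]
    · rw [if_neg (not_lt_of_gt h), if_pos h, if_neg (ne_of_gt h)]
  rw [Finset.sum_congr rfl h4, Finset.sum_const, smul_eq_mul]

def Pc (e : ℕ) (I K : Finset (Fin n)) : Prop := (-1 : ℝ) ^ e * Lam w I K = Lam w K I

lemma Pc_iff (e : ℕ) (I K : Finset (Fin n)) :
    Pc w e I K ↔ (Wp w (I ∩ K) = 0 ∨ Even (e + I.card * K.card + (I ∩ K).card)) := by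
  rw [Pc, Lam, Lam, Finset.inter_comm K I]
  rw [show (-1:ℝ)^e * (Wp w (I ∩ K) * (-1) ^ ccnt K I) =
    Wp w (I ∩ K) * (-1) ^ (e + ccnt K I) from by rw [pow_add]; ring]
  rw [← sub_eq_zero, ← mul_sub, mul_eq_zero, sub_eq_zero, neg_one_pow_eq_iff]
  have hcc := cc_add_cc I K
  obtain ⟨Pk, hPk⟩ : ∃ x, I.card * K.card = x := ⟨_, rfl⟩
  rw [hPk] at hcc ⊢
  apply or_congr Iff.rfl
  rw [Nat.even_iff, Nat.even_iff]
  omega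

lemma Pc_step (e m : ℕ) (hm : 1 ≤ m) (I : Finset (Fin n))
    (h : ∀ K : Finset (Fin n), K.card = m → Pc w e I K)
    (J : Finset (Fin n)) (hJ : J.card = m + 2) : Pc w e I J := by
  rw [Pc_iff]
  by_cases hW : Wp w (I ∩ J) = 0
  · exact Or.inl hW
  right
  rw [hJ]
  have hsplit := Finset.card_filter_add_card_filter_not (s := J) (p := (· ∈ I))
  have h3 : 2 ≤ (J.filter (· ∈ I)).card ∨ 2 ≤ (J.filter (fun a => ¬ a ∈ I)).card := by
    omega
  obtain ⟨a, b, haJ, hbJ, hab, hiff⟩ :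
      ∃ a b : Fin n, a ∈ J ∧ b ∈ J ∧ a ≠ b ∧ (a ∈ I ↔ b ∈ I) := by
    rcases h3 with h3 | h3
    · obtain ⟨a, ha, b, hb, hab⟩ := Finset.one_lt_card.mp
        (by omega : 1 < (J.filter (· ∈ I)).card)
      rw [Finset.mem_filter] at ha hb
      exact ⟨a, b, ha.1, hb.1, hab, iff_of_true ha.2 hb.2⟩
    · obtain ⟨a, ha, b, hb, hab⟩ := Finset.one_lt_card.mp
        (by omega : 1 < (J.filter (fun a => ¬ a ∈ I)).card)
      rw [Finset.mem_filter] at ha hb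
      exact ⟨a, b, ha.1, hb.1, hab, iff_of_false ha.2 hb.2⟩
  set K := (J.erase a).erase b with hKdef
  have hbJa : b ∈ J.erase a := Finset.mem_erase.mpr ⟨hab.symm, hbJ⟩
  have hKcard : K.card = m := by
    rw [hKdef, Finset.card_erase_of_mem hbJa, Finset.card_erase_of_mem haJ, hJ]
    omega
  have hPK := (Pc_iff w e I K).mp (h K hKcard)
  have hWK : Wp w (I ∩ K) ≠ 0 := by
    intro h0
    rcases Finset.prod_eq_zero_iff.mp h0 with ⟨x, hx, hx0⟩
    have hxIJ : x ∈ I ∩ J := by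
      rw [Finset.mem_inter] at hx ⊢
      exact ⟨hx.1, Finset.mem_of_mem_erase (Finset.mem_of_mem_erase hx.2)⟩
    exact hW (Finset.prod_eq_zero hxIJ hx0)
  rcases hPK with h0 | hEv
  · exact absurd h0 hWK
  rw [hKcard] at hEv
  obtain ⟨d, hd⟩ : ∃ d, I.card = d := ⟨_, rfl⟩
  obtain ⟨A, hA⟩ : ∃ A, I.card * m = A := ⟨_, rfl⟩
  obtain ⟨B, hB⟩ : ∃ B, I.card * (m + 2) = B := ⟨_, rfl⟩
  have hAB : B = A + 2 * d := by rw [← hA, ← hB, ← hd]; ring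
  rw [hA] at hEv
  rw [hB]
  by_cases haI : a ∈ I
  · have hbI : b ∈ I := hiff.mp haI
    have hIK : I ∩ K = ((I ∩ J).erase a).erase b := by
      ext x
      simp only [hKdef, Finset.mem_inter, Finset.mem_erase]
      tauto
    have haIJ : a ∈ I ∩ J := Finset.mem_inter.mpr ⟨haI, haJ⟩
    have hbIJ : b ∈ (I ∩ J).erase a :=
      Finset.mem_erase.mpr ⟨hab.symm, Finset.mem_inter.mpr ⟨hbI, hbJ⟩⟩
    have hcard : (I ∩ K).card = (I ∩ J).card - 2 := by
      rw [hIK, Finset.card_erase_of_mem hbIJ, Finset.card_erase_of_mem haIJ]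
      omega
    have h2le : 2 ≤ (I ∩ J).card := by
      have := Finset.one_lt_card.mpr ⟨a, haIJ, b, Finset.mem_inter.mpr ⟨hbI, hbJ⟩, hab⟩
      omega
    rw [hcard] at hEv
    rw [Nat.even_iff] at hEv ⊢
    omega
  · have hbI : b ∉ I := fun hb2 => haI (hiff.mpr hb2)
    have hIK : I ∩ K = I ∩ J := by
      ext x
      simp only [hKdef, Finset.mem_inter, Finset.mem_erase]
      constructor
      · rintro ⟨h1, _, _, h2⟩
        exact ⟨h1, h2⟩
      · rintro ⟨h1, h2⟩
        exact ⟨h1, fun hxb => hbI (hxb ▸ h1), fun hxa => haI (hxa ▸ h1), h2⟩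
    rw [hIK] at hEv
    rw [Nat.even_iff] at hEv ⊢
    omega

lemma symmDiff_right_cancel {I I₀ K : Finset (Fin n)}
    (h : symmDiff I K = symmDiff I₀ K) : I = I₀ := by
  have h1 : symmDiff (symmDiff I K) K = symmDiff (symmDiff I₀ K) K := by rw [h]
  rwa [symmDiff_symmDiff_cancel_right, symmDiff_symmDiff_cancel_right] at h1

lemma core (m : ℕ) (hm : 1 ≤ m) (c : Finset (Fin n) → ℝ) (ε : Finset (Fin n) → ℕ)
    (h : ∀ K : Finset (Fin n), K.card = m →
      (∑ I, c I • ((-1:ℝ) ^ ε I • (Emon w I * Emon w K))) = ∑ I, c I • (Emon w K * Emon w I))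
    (J : Finset (Fin n)) (hJ : J.card = m + 2) :
    (∑ I, c I • ((-1:ℝ) ^ ε I • (Emon w I * Emon w J))) = ∑ I, c I • (Emon w J * Emon w I) := by
  have hTmul : ∀ I K : Finset (Fin n),
      Tv w (c I • ((-1:ℝ) ^ ε I • (Emon w I * Emon w K))) - Tv w (c I • (Emon w K * Emon w I))
      = (c I * ((-1:ℝ) ^ ε I * Lam w I K - Lam w K I)) • db (symmDiff I K) := by
    intro I K
    rw [map_smul, map_smul, map_smul, Tv_Emon_mul, Tv_Emon_mul, symmDiff_comm K I,
      smul_smul, smul_smul, smul_smul, ← sub_smul]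
    congr 1
    ring
  have hco : ∀ K : Finset (Fin n), K.card = m → ∀ I₀,
      c I₀ * ((-1:ℝ) ^ ε I₀ * Lam w I₀ K - Lam w K I₀) = 0 := by
    intro K hK I₀
    have h3 : Tv w (∑ I, c I • ((-1:ℝ) ^ ε I • (Emon w I * Emon w K)))
        - Tv w (∑ I, c I • (Emon w K * Emon w I)) = 0 := by rw [h K hK, sub_self]
    rw [map_sum, map_sum, ← Finset.sum_sub_distrib] at h3
    rw [Finset.sum_congr rfl (fun I _ => hTmul I K)] at h3
    have h4 := congrFun h3 (symmDiff I₀ K)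
    rw [Finset.sum_apply] at h4
    have h5 : ∀ I : Finset (Fin n),
        ((c I * ((-1:ℝ) ^ ε I * Lam w I K - Lam w K I)) • db (symmDiff I K)) (symmDiff I₀ K)
        = if I₀ = I then c I * ((-1:ℝ) ^ ε I * Lam w I K - Lam w K I) else 0 := by
      intro I
      rw [Pi.smul_apply, smul_eq_mul, db]
      by_cases hII : I₀ = I
      · rw [if_pos (by rw [hII]), if_pos hII, mul_one]
      · rw [if_neg (fun hEq => hII (symmDiff_right_cancel hEq)), if_neg hII, mul_zero]
    rw [Finset.sum_congr rfl (fun I _ => h5 I), Finset.sum_ite_eq Finset.univ I₀] at h4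
    simpa using h4
  refine Finset.sum_congr rfl fun I _ => ?_
  by_cases hc : c I = 0
  · rw [hc, zero_smul, zero_smul]
  have hPm : ∀ K : Finset (Fin n), K.card = m → Pc w (ε I) I K := by
    intro K hK
    rcases mul_eq_zero.mp (hco K hK I) with h0 | h0
    · exact absurd h0 hc
    · exact sub_eq_zero.mp h0
  have hPJ : (-1:ℝ) ^ ε I * Lam w I J = Lam w J I := Pc_step w (ε I) m hm I hPm J hJ
  have hzero : ((-1:ℝ) ^ ε I • (Emon w I * Emon w J)) - Emon w J * Emon w I = 0 := by
    apply eq_zero_of_Tv w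
    rw [map_sub, map_smul, Tv_Emon_mul, Tv_Emon_mul, symmDiff_comm J I, smul_smul, ← sub_smul]
    rw [show (-1:ℝ) ^ ε I * Lam w I J - Lam w J I = 0 from by rw [hPJ, sub_self]]
    rw [zero_smul]
  rw [sub_eq_zero.mp hzero]

lemma involute_pl (l : List (Fin n)) :
    involute (pl w l) = (-1:ℝ) ^ l.length • pl w l := by
  induction l with
  | nil => simp [pl]
  | cons i t ih =>
    have h1 : pl w (i :: t) = gw w i * pl w t := by simp [pl]
    rw [h1, map_mul, ih, gw, involute_ι, List.length_cons]
    rw [neg_mul, mul_smul_comm, pow_succ, mul_neg_one, neg_smul]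

lemma involute_Emon (I : Finset (Fin n)) :
    involute (Emon w I) = (-1:ℝ) ^ I.card • Emon w I := by
  rw [Emon, involute_pl, Finset.length_sort]

def gss (k : ℕ) : Submodule ℝ (CliffordAlgebra (Qw w)) :=
  Submodule.span ℝ {x | ∃ l : List (Fin n),
    l.Chain' (· < ·) ∧ l.length = k ∧ x = pl w l}

lemma Emon_mem_gss {k : ℕ} {K : Finset (Fin n)} (hK : K.card = k) :
    Emon w K ∈ gss w k :=
  Submodule.subset_span ⟨K.sort (· ≤ ·), sort_chain' K,
    by rw [Finset.length_sort, hK], rfl⟩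

lemma main1 (m : ℕ) (hm : 1 ≤ m) (X : CliffordAlgebra (Qw w))
    (hX : ∀ V ∈ gss w m, X * V = V * X) :
    ∀ V ∈ gss w (m + 2), X * V = V * X := by
  obtain ⟨c, hc⟩ := exists_coeffs w X
  have hmain : ∀ J : Finset (Fin n), J.card = m + 2 → X * Emon w J = Emon w J * X := by
    intro J hJ
    have hcore := core w m hm c (fun _ => 0) ?_ J hJ
    · rw [hc, Finset.sum_mul, Finset.mul_sum]
      calc ∑ I, (c I • Emon w I) * Emon w J
          = ∑ I, c I • ((-1:ℝ) ^ (0:ℕ) • (Emon w I * Emon w J)) := by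
            refine Finset.sum_congr rfl fun I _ => ?_
            rw [pow_zero, one_smul, smul_mul_assoc]
        _ = ∑ I, c I • (Emon w J * Emon w I) := hcore
        _ = ∑ I, Emon w J * (c I • Emon w I) := by
            refine Finset.sum_congr rfl fun I _ => (mul_smul_comm _ _ _).symm
    · intro K hK
      have hXK := hX (Emon w K) (Emon_mem_gss w hK)
      rw [hc] at hXK
      calc ∑ I, c I • ((-1:ℝ) ^ (0:ℕ) • (Emon w I * Emon w K))
          = ∑ I, (c I • Emon w I) * Emon w K := by
            refine Finset.sum_congr rfl fun I _ => ?_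
            rw [pow_zero, one_smul, smul_mul_assoc]
        _ = (∑ I, c I • Emon w I) * Emon w K := (Finset.sum_mul _ _ _).symm
        _ = Emon w K * ∑ I, c I • Emon w I := hXK
        _ = ∑ I, Emon w K * (c I • Emon w I) := Finset.mul_sum _ _ _
        _ = ∑ I, c I • (Emon w K * Emon w I) := by
            refine Finset.sum_congr rfl fun I _ => mul_smul_comm _ _ _
  intro V hV
  refine Submodule.span_induction (p := fun V _ => X * V = V * X) ?_ ?_ ?_ ?_ hV
  · rintro x ⟨l, hch, hlen, rfl⟩
    have hnd : l.Nodup := (List.isChain_iff_pairwise.mp hch).imp ne_of_lt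
    have hJ : l.toFinset.card = m + 2 := by rw [List.toFinset_card_of_nodup hnd, hlen]
    have := hmain l.toFinset hJ
    rwa [Emon_toFinset w l hch] at this
  · show X * 0 = 0 * X
    rw [mul_zero, zero_mul]
  · intro x y _ _ hx hy
    show X * (x + y) = (x + y) * X
    rw [mul_add, add_mul, hx, hy]
  · intro a x _ hx
    show X * (a • x) = (a • x) * X
    rw [mul_smul_comm, smul_mul_assoc, hx]

lemma main2 (m : ℕ) (hm : 1 ≤ m) (X : CliffordAlgebra (Qw w))
    (hX : ∀ V ∈ gss w m, involute X * V = V * X) :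
    ∀ V ∈ gss w (m + 2), involute X * V = V * X := by
  obtain ⟨c, hc⟩ := exists_coeffs w X
  have hinv : involute X = ∑ I, c I • ((-1:ℝ) ^ I.card • Emon w I) := by
    rw [hc, map_sum]
    exact Finset.sum_congr rfl fun I _ => by rw [map_smul, involute_Emon]
  have hmain : ∀ J : Finset (Fin n), J.card = m + 2 →
      involute X * Emon w J = Emon w J * X := by
    intro J hJ
    have hcore := core w m hm c (fun I => I.card) ?_ J hJ
    · rw [hinv, hc, Finset.sum_mul, Finset.mul_sum]
      calc ∑ I, (c I • ((-1:ℝ) ^ I.card • Emon w I)) * Emon w J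
          = ∑ I, c I • ((-1:ℝ) ^ I.card • (Emon w I * Emon w J)) := by
            refine Finset.sum_congr rfl fun I _ => ?_
            rw [smul_mul_assoc, smul_mul_assoc]
        _ = ∑ I, c I • (Emon w J * Emon w I) := hcore
        _ = ∑ I, Emon w J * (c I • Emon w I) := by
            refine Finset.sum_congr rfl fun I _ => (mul_smul_comm _ _ _).symm
    · intro K hK
      have hXK := hX (Emon w K) (Emon_mem_gss w hK)
      rw [hinv, hc] at hXK
      calc ∑ I, c I • ((-1:ℝ) ^ I.card • (Emon w I * Emon w K))
          = ∑ I, (c I • ((-1:ℝ) ^ I.card • Emon w I)) * Emon w K := by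
            refine Finset.sum_congr rfl fun I _ => ?_
            rw [smul_mul_assoc, smul_mul_assoc]
        _ = (∑ I, c I • ((-1:ℝ) ^ I.card • Emon w I)) * Emon w K := (Finset.sum_mul _ _ _).symm
        _ = Emon w K * ∑ I, c I • Emon w I := hXK
        _ = ∑ I, Emon w K * (c I • Emon w I) := Finset.mul_sum _ _ _
        _ = ∑ I, c I • (Emon w K * Emon w I) := by
            refine Finset.sum_congr rfl fun I _ => mul_smul_comm _ _ _
  intro V hV
  refine Submodule.span_induction (p := fun V _ => involute X * V = V * X) ?_ ?_ ?_ ?_ hV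
  · rintro x ⟨l, hch, hlen, rfl⟩
    have hnd : l.Nodup := (List.isChain_iff_pairwise.mp hch).imp ne_of_lt
    have hJ : l.toFinset.card = m + 2 := by rw [List.toFinset_card_of_nodup hnd, hlen]
    have := hmain l.toFinset hJ
    rwa [Emon_toFinset w l hch] at this
  · show involute X * 0 = 0 * X
    rw [mul_zero, zero_mul]
  · intro x y _ _ hx hy
    show involute X * (x + y) = (x + y) * X
    rw [mul_add, add_mul, hx, hy]
  · intro a x _ hx
    show involute X * (a • x) = (a • x) * X
    rw [mul_smul_comm, smul_mul_assoc, hx]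

end S17


/-- For odd `m` with `1 ≤ m ≤ n - 2`, the (twisted) centralizer of the grade-`m` subspace
is contained in the (twisted) centralizer of the grade-`(m+2)` subspace. -/
theorem stmt17 (p q r m : ℕ) (hm : Odd m) (hm1 : 1 ≤ m) (hm2 : m ≤ p + q + r - 2) :
    (∀ X : CliffordAlgebra (Qf p q r),
      (∀ V ∈ gradeSubspace p q r m, X * V = V * X) →
      ∀ V ∈ gradeSubspace p q r (m + 2), X * V = V * X) ∧
    (∀ X : CliffordAlgebra (Qf p q r),
      (∀ V ∈ gradeSubspace p q r m, involute X * V = V * X) →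
      ∀ V ∈ gradeSubspace p q r (m + 2), involute X * V = V * X) := by
  exact ⟨fun X hX => S17.main1 (n := p + q + r)
      (fun i => cliffSig p q (i : ℕ)) m hm1 X hX,
    fun X hX => S17.main2 (n := p + q + r)
      (fun i => cliffSig p q (i : ℕ)) m hm1 X hX⟩

end
end
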